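/- arXiv:1502.02074 — 6 statements merged into one kernel-verified Lean document; each statement's English description precedes it below -/
import Mathlib

section
/- If x is a point of a subset S of ℝⁿ at which S is locally an embedded C² submanifold, and y ∈ ℝⁿ satisfies {x} = proj_S(x + λz) for some λ > 0 (i.e., x is the unique nearest point of S to x + λz), then z lies in the normal space to S at x. Conversely, if z is in the normal space to S at x, then for some λ > 0, x is a local nearest point in S to x + λz. -/
open scoped RealInnerProductSpace
open Matrix
open MeasureTheory

noncomputable section

/-- The normal space to `S` at `x`: the orthogonal complement of the tangent cone. -/
def NormalAt {E : Type*} [NormedAddCommGroup E] [InnerProductSpace ℝ E]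
    (S : Set E) (x : E) : Set E :=
  {v | ∀ w ∈ tangentConeAt ℝ S x, ⟪v, w⟫ = 0}

/-- `x` is a C²-smooth point of `S`: near `x`, `S` is the regular zero set of a C² map. -/
def SmoothPt {E : Type*} [NormedAddCommGroup E] [NormedSpace ℝ E]
    (S : Set E) (x : E) : Prop :=
  x ∈ S ∧ ∃ (U : Set E) (k : ℕ) (f : E → EuclideanSpace ℝ (Fin k)),
    IsOpen U ∧ x ∈ U ∧ ContDiffOn ℝ 2 f U ∧
    (∀ z ∈ U, Function.Surjective (fderivWithin ℝ f U z)) ∧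
    S ∩ U = {z ∈ U | f z = 0}

/-- ED critical point of `y` on `S`. -/
def EDCritPt {E : Type*} [NormedAddCommGroup E] [InnerProductSpace ℝ E]
    (S : Set E) (y x : E) : Prop :=
  SmoothPt S x ∧ (y - x) ∈ NormalAt S x

/-- Metric projection of `y` onto `S`. -/
def projSet {E : Type*} [NormedAddCommGroup E] (S : Set E) (y : E) : Set E :=
  {x ∈ S | dist y x = Metric.infDist y S}

/-- Matrices viewed as Euclidean space (Frobenius norm). -/
def toEuc {n t : ℕ} (X : Matrix (Fin n) (Fin t) ℝ) : EuclideanSpace ℝ (Fin n × Fin t) :=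
  WithLp.toLp 2 (fun p => X p.1 p.2)

/-- Rectangular diagonal matrix. -/
def diagRect {n t : ℕ} (x : Fin n → ℝ) : Matrix (Fin n) (Fin t) ℝ :=
  fun i j => if (j : ℕ) = (i : ℕ) then x i else 0

/-- Singular values of a rectangular matrix, in non-increasing order. -/
def singvals {n t : ℕ} (X : Matrix (Fin n) (Fin t) ℝ) : EuclideanSpace ℝ (Fin n) :=
  let g : Fin n → ℝ := fun j =>
    Real.sqrt ((Matrix.isHermitian_mul_conjTranspose_self X).eigenvalues j)
  WithLp.toLp 2 (fun i => g (Tuple.sort (fun j => -g j) i))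

/-- A vector of signs. -/
def IsSignFn {n : ℕ} (ε : Fin n → ℝ) : Prop := ∀ i, ε i = 1 ∨ ε i = -1

/-- Absolutely symmetric set: invariant under all signed permutations of coordinates. -/
def AbsSymm {n : ℕ} (S : Set (EuclideanSpace ℝ (Fin n))) : Prop :=
  ∀ (π : Equiv.Perm (Fin n)) (ε : Fin n → ℝ), IsSignFn ε →
    ∀ x : EuclideanSpace ℝ (Fin n), x ∈ S ↔ (WithLp.toLp 2 (fun i => ε i * x (π i)) : EuclideanSpace ℝ (Fin n)) ∈ S

/-- Orthogonally invariant set of matrices. -/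
def OrthInv {n t : ℕ} (M : Set (Matrix (Fin n) (Fin t) ℝ)) : Prop :=
  ∀ (U : Matrix (Fin n) (Fin n) ℝ) (V : Matrix (Fin t) (Fin t) ℝ),
    U * Uᵀ = 1 → V * Vᵀ = 1 → (fun X => U * X * Vᵀ) '' M = M

/-- Projection onto a set of matrices in Frobenius norm. -/
def matProj {n t : ℕ} (A : Set (Matrix (Fin n) (Fin t) ℝ)) (Y : Matrix (Fin n) (Fin t) ℝ) :
    Set (Matrix (Fin n) (Fin t) ℝ) :=
  {X ∈ A | dist (toEuc Y) (toEuc X) = Metric.infDist (toEuc Y) (toEuc '' A)}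

/-- ED critical point in matrix space (with Frobenius inner product). -/
def MatEDCritPt {n t : ℕ} (M : Set (Matrix (Fin n) (Fin t) ℝ))
    (Y X : Matrix (Fin n) (Fin t) ℝ) : Prop :=
  EDCritPt (toEuc '' M) (toEuc Y) (toEuc X)

open Filter Topology

set_option maxHeartbeats 1000000

/-- at a C²-smooth point `x` of `S`, a vector `z` is normal to `S` at `x`
iff (⇐ for some λ>0, globally) `x` is the unique nearest point of `S` to `x + λz`, and
(⇒) for some λ>0, `x` is a local nearest point of `S` to `x + λz`. -/
theorem ed_crit_normal_char {n : ℕ} (S : Set (EuclideanSpace ℝ (Fin n)))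
    (x z : EuclideanSpace ℝ (Fin n)) (hx : SmoothPt S x) :
    ((∃ lam : ℝ, 0 < lam ∧ projSet S (x + lam • z) = {x}) → z ∈ NormalAt S x) ∧
    (z ∈ NormalAt S x → ∃ lam : ℝ, 0 < lam ∧ ∃ U ∈ nhds x,
      ∀ w ∈ S ∩ U, dist (x + lam • z) x ≤ dist (x + lam • z) w) := by
  classical
  obtain ⟨hxS, U, k, f, hU, hxU, hf2, hsurj, hSU⟩ := hx
  have hfd : fderivWithin ℝ f U x = fderiv ℝ f x := fderivWithin_of_isOpen hU hxU
  set f' : EuclideanSpace ℝ (Fin n) →L[ℝ] EuclideanSpace ℝ (Fin k) := fderiv ℝ f x with hf'def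
  have hcd : ContDiffAt ℝ 2 f x := hf2.contDiffAt (hU.mem_nhds hxU)
  have hstrict : HasStrictFDerivAt f f' x := hcd.hasStrictFDerivAt (by norm_num)
  have hrange : f'.range = ⊤ := by
    rw [LinearMap.range_eq_top]
    have := hsurj x hxU
    rwa [hfd] at this
  have hfx : f x = 0 := by
    have hmem : x ∈ S ∩ U := ⟨hxS, hxU⟩
    rw [hSU] at hmem
    exact hmem.2
  -- Key construction: every kernel vector is realized by a curve in S with positive speeds.
  have curve : ∀ w ∈ f'.ker, ∃ d : ℕ → EuclideanSpace ℝ (Fin n),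
      (∀ᶠ m in atTop, x + d m ∈ S) ∧
      Tendsto (fun m : ℕ => (m : ℝ) • d m) atTop (𝓝 w) := by
    intro w hw
    set wk : f'.ker := ⟨w, hw⟩ with hwk
    set ψ : f'.ker → EuclideanSpace ℝ (Fin n) :=
      hstrict.implicitFunction f f' hrange (f x) with hψdef
    have hψ : HasStrictFDerivAt ψ (f'.ker).subtypeL 0 :=
      hstrict.to_implicitFunction hrange
    set γ : ℝ → EuclideanSpace ℝ (Fin n) := fun t => ψ (t • wk) with hγdef
    have hγ0 : γ 0 = x := by
      simp only [hγdef, zero_smul]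
      exact hstrict.implicitFunction_apply_image hrange
    have hη : HasDerivAt (fun t : ℝ => t • wk) wk 0 := by
      simpa using (hasDerivAt_id (0:ℝ)).smul_const wk
    have hγd : HasDerivAt γ w 0 := by
      have hψ0 : HasFDerivAt ψ (f'.ker).subtypeL ((0:ℝ) • wk) := by
        rw [zero_smul]; exact hψ.hasFDerivAt
      have := hψ0.comp_hasDerivAt (x := (0:ℝ)) hη
      exact this
    set d : ℕ → EuclideanSpace ℝ (Fin n) := fun m => γ ((m : ℝ)⁻¹) - x with hd
    have hinv : Tendsto (fun m : ℕ => ((m : ℝ))⁻¹) atTop (𝓝 0) :=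
      tendsto_natCast_atTop_atTop.inv_tendsto_atTop
    refine ⟨d, ?_, ?_⟩
    · -- eventually in S
      have hcont : Tendsto γ (𝓝 0) (𝓝 x) := by
        have := hγd.continuousAt.tendsto
        rwa [hγ0] at this
      have hmap := hstrict.map_implicitFunction_eq hrange
      have htend : Tendsto (fun m : ℕ => ((f x : EuclideanSpace ℝ (Fin k)),
          (((m : ℝ))⁻¹ • wk : f'.ker))) atTop (𝓝 (f x, 0)) := by
        refine Tendsto.prodMk_nhds tendsto_const_nhds ?_
        simpa using hinv.smul_const wk
      have hev1 : ∀ᶠ m : ℕ in atTop, f (γ ((m : ℝ)⁻¹)) = f x := htend.eventually hmap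
      have hev2 : ∀ᶠ m : ℕ in atTop, γ ((m : ℝ)⁻¹) ∈ U :=
        (hcont.comp hinv).eventually (hU.mem_nhds hxU)
      filter_upwards [hev1, hev2] with m h1 h2
      have : γ ((m : ℝ)⁻¹) ∈ S ∩ U := by
        rw [hSU]
        exact ⟨h2, by rw [h1, hfx]⟩
      simpa [hd] using this.1
    · -- speed limit
      have hslope := hasDerivAt_iff_tendsto_slope.mp hγd
      have hinv' : Tendsto (fun m : ℕ => ((m : ℝ))⁻¹) atTop (𝓝[≠] (0:ℝ)) := by
        refine tendsto_nhdsWithin_of_tendsto_nhds_of_eventually_within _ hinv ?_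
        filter_upwards [eventually_ge_atTop 1] with m hm
        have : (0:ℝ) < (m : ℝ) := by exact_mod_cast hm
        simp [Set.mem_setOf_eq, inv_ne_zero this.ne']
      have := hslope.comp hinv'
      refine this.congr fun m => ?_
      simp [slope, hd, hγ0, vsub_eq_sub]
  -- kernel vectors are tangent
  have ker_tangent : ∀ w ∈ f'.ker, w ∈ tangentConeAt ℝ S x := by
    intro w hw
    obtain ⟨d, hdS, hdl⟩ := curve w hw
    refine mem_tangentConeAt_iff_exists_seq_norm_tendsto_atTop.mpr ⟨fun m => (m : ℝ), d, ?_, hdS, hdl⟩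
    simpa [Real.norm_natCast] using tendsto_natCast_atTop_atTop (R := ℝ)
  -- tangent vectors are in the kernel
  have tangent_ker : ∀ w ∈ tangentConeAt ℝ S x, f' w = 0 := by
    intro w hw
    obtain ⟨c, d, hc, hdS, hcd⟩ := mem_tangentConeAt_iff_exists_seq_norm_tendsto_atTop.mp hw
    have hd0 : Tendsto d atTop (𝓝 0) := tangentConeAt.lim_zero atTop hc hcd
    have hlim :=
      (hstrict.hasFDerivAt.hasFDerivWithinAt (s := S)).lim hd0 hdS hcd
    have hxd : Tendsto (fun m => x + d m) atTop (𝓝 x) := by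
      simpa using tendsto_const_nhds.add hd0
    have hevU : ∀ᶠ m in atTop, x + d m ∈ U := hxd.eventually (hU.mem_nhds hxU)
    have hev : ∀ᶠ m in atTop, c m • (f (x + d m) - f x) = 0 := by
      filter_upwards [hdS, hevU] with m h1 h2
      have : x + d m ∈ S ∩ U := ⟨h1, h2⟩
      rw [hSU] at this
      rw [this.2, hfx]
      simp
    have hzero : Tendsto (fun m => c m • (f (x + d m) - f x)) atTop
        (𝓝 (0 : EuclideanSpace ℝ (Fin k))) :=
      Tendsto.congr' (by filter_upwards [hev] with m hm using hm.symm) tendsto_const_nhds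
    exact tendsto_nhds_unique hlim hzero
  constructor
  · -- global unique projection ⇒ normal
    rintro ⟨lam, hlam, hproj⟩ w hw
    have key : ∀ v, v ∈ f'.ker → ⟪z, v⟫ ≤ 0 := by
      intro v hv
      obtain ⟨d, hdS, hdl⟩ := curve v hv
      have hxproj : x ∈ projSet S (x + lam • z) := by rw [hproj]; rfl
      have hd0 : Tendsto d atTop (𝓝 (0 : EuclideanSpace ℝ (Fin n))) :=
        tangentConeAt.lim_zero atTop
          (by simpa [Real.norm_natCast] using tendsto_natCast_atTop_atTop (R := ℝ)) hdl
      have hA : Tendsto (fun m : ℕ => 2 * lam * ⟪z, (m : ℝ) • d m⟫) atTop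
          (𝓝 (2 * lam * ⟪z, v⟫)) :=
        (tendsto_const_nhds.inner hdl).const_mul _
      have hB : Tendsto (fun m : ℕ => ‖(m : ℝ) • d m‖ * ‖d m‖) atTop (𝓝 0) := by
        simpa using hdl.norm.mul hd0.norm
      have hle : ∀ᶠ m : ℕ in atTop,
          2 * lam * ⟪z, (m : ℝ) • d m⟫ ≤ ‖(m : ℝ) • d m‖ * ‖d m‖ := by
        filter_upwards [hdS] with m hm
        have hdist : dist (x + lam • z) x ≤ dist (x + lam • z) (x + d m) :=
          hxproj.2 ▸ Metric.infDist_le_dist_of_mem hm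
        have h1 : ‖lam • z‖ ≤ ‖lam • z - d m‖ := by
          simpa [dist_eq_norm, add_sub_add_left_eq_sub, sub_sub_eq_add_sub] using hdist
        have h2 : ‖lam • z‖ ^ 2 ≤ ‖lam • z - d m‖ ^ 2 := by
          exact pow_le_pow_left₀ (norm_nonneg _) h1 2
        rw [norm_sub_sq_real] at h2
        have h3 : 2 * (lam * ⟪z, d m⟫) ≤ ‖d m‖ ^ 2 := by
          have := real_inner_smul_left z (d m) lam
          nlinarith [h2]
        have hmn : (0:ℝ) ≤ (m : ℝ) := Nat.cast_nonneg m
        have h4 : (m : ℝ) * (2 * (lam * ⟪z, d m⟫)) ≤ (m : ℝ) * ‖d m‖ ^ 2 :=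
          mul_le_mul_of_nonneg_left h3 hmn
        have h5 : ⟪z, (m : ℝ) • d m⟫ = (m : ℝ) * ⟪z, d m⟫ := real_inner_smul_right z (d m) m
        have h6 : ‖(m : ℝ) • d m‖ = (m : ℝ) * ‖d m‖ := by
          rw [norm_smul, Real.norm_natCast]
        rw [h5]; rw [h6]
        nlinarith [h4]
      have := le_of_tendsto_of_tendsto hA hB hle
      nlinarith [this]
    have hker : w ∈ f'.ker := by
      rw [LinearMap.mem_ker]
      exact tangent_ker w hw
    have h1 := key w hker
    have h2 := key (-w) (by simpa using neg_mem hker)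
    rw [inner_neg_right] at h2
    linarith
  · -- normal ⇒ local nearest point
    intro hz
    have zker : ∀ v ∈ f'.ker, ⟪z, v⟫ = 0 := fun v hv => hz v (ker_tangent v hv)
    -- Lipschitz bound on the derivative near x
    have hcd1 : ContDiffAt ℝ 1 (fderiv ℝ f) x := by
      have := hf2.fderiv_of_isOpen hU (m := 1) (by norm_num)
      exact this.contDiffAt (hU.mem_nhds hxU)
    obtain ⟨K, t, ht, hlip⟩ := hcd1.exists_lipschitzOnWith
    obtain ⟨r, hr, hball⟩ := Metric.mem_nhds_iff.mp (Filter.inter_mem (hU.mem_nhds hxU) ht)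
    have hballU : Metric.ball x r ⊆ U := fun u hu => (hball hu).1
    have hballt : Metric.ball x r ⊆ t := fun u hu => (hball hu).2
    -- Taylor-type estimate
    have taylor : ∀ w ∈ Metric.ball x r,
        ‖f w - f x - f' (w - x)‖ ≤ (K : ℝ) * ‖w - x‖ * ‖w - x‖ := by
      intro w hw
      have hseg : segment ℝ x w ⊆ Metric.ball x r :=
        (convex_ball x r).segment_subset (Metric.mem_ball_self hr) hw
      have hsegcb : segment ℝ x w ⊆ Metric.closedBall x ‖w - x‖ := by
        refine (convex_closedBall x ‖w - x‖).segment_subset ?_ ?_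
        · simp [Metric.mem_closedBall, norm_nonneg]
        · simp [Metric.mem_closedBall, dist_eq_norm]
      refine Convex.norm_image_sub_le_of_norm_hasFDerivWithin_le'
        (f' := fun u => fderiv ℝ f u) (φ := f')
        (fun u hu => ?_) (fun u hu => ?_) (convex_segment x w)
        (left_mem_segment ℝ x w) (right_mem_segment ℝ x w)
      · have hdiff : DifferentiableAt ℝ f u :=
          (hf2.contDiffAt (hU.mem_nhds (hballU (hseg hu)))).differentiableAt (by norm_num)
        exact hdiff.hasFDerivAt.hasFDerivWithinAt
      · have hdd := hlip.dist_le_mul u (hballt (hseg hu)) x (hballt (Metric.mem_ball_self hr))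
        have hnu : dist u x ≤ ‖w - x‖ := by
          have := hsegcb hu
          simpa [Metric.mem_closedBall] using this
        calc ‖fderiv ℝ f u - f'‖ = dist (fderiv ℝ f u) (fderiv ℝ f x) := by
              rw [dist_eq_norm]
          _ ≤ (K : ℝ) * dist u x := hdd
          _ ≤ (K : ℝ) * ‖w - x‖ := by
              exact mul_le_mul_of_nonneg_left hnu (by positivity)
    -- antilipschitz on the orthogonal complement of the kernel
    have hginj : LinearMap.ker ((f' : EuclideanSpace ℝ (Fin n) →ₗ[ℝ] EuclideanSpace ℝ (Fin k)).comp
        (f'.ker)ᗮ.subtype) = ⊥ := by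
      rw [LinearMap.ker_eq_bot]
      intro u v huv
      have hu' : f' (u : EuclideanSpace ℝ (Fin n)) - f' (v : EuclideanSpace ℝ (Fin n)) = 0 := by
        have : f' (u : EuclideanSpace ℝ (Fin n)) = f' (v : EuclideanSpace ℝ (Fin n)) := huv
        rw [this, sub_self]
      have hmem : ((u : EuclideanSpace ℝ (Fin n)) - v) ∈ f'.ker := by
        rw [LinearMap.mem_ker, map_sub]; exact hu'
      have hmem2 : ((u : EuclideanSpace ℝ (Fin n)) - v) ∈ (f'.ker)ᗮ :=
        sub_mem u.2 v.2
      have : ((u : EuclideanSpace ℝ (Fin n)) - v) = 0 := by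
        have h := (Submodule.mem_orthogonal _ _).mp hmem2 _ hmem
        exact inner_self_eq_zero.mp h
      exact Subtype.ext (sub_eq_zero.mp this)
    obtain ⟨c, hc, hanti⟩ := LinearMap.exists_antilipschitzWith _ hginj
    have hanti' : ∀ u ∈ (f'.ker)ᗮ, ‖u‖ ≤ (c : ℝ) * ‖f' u‖ := by
      intro u hu
      have := hanti.le_mul_dist ⟨u, hu⟩ 0
      simpa [dist_eq_norm] using this
    -- the inner product estimate
    set C : ℝ := ‖z‖ * (c : ℝ) * (K : ℝ) with hC
    have hC0 : 0 ≤ C := by rw [hC]; positivity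
    clear_value C
    have hinner : ∀ w ∈ S ∩ Metric.ball x r, ⟪z, w - x⟫ ≤ C * ‖w - x‖ ^ 2 := by
      rintro w ⟨hwS, hwB⟩
      have hfw : f w = 0 := by
        have : w ∈ S ∩ U := ⟨hwS, hballU hwB⟩
        rw [hSU] at this; exact this.2
      set v := w - x with hv
      clear_value v
      set p : EuclideanSpace ℝ (Fin n) := (↑(Submodule.orthogonalProjectionOnto (f'.ker) v) : EuclideanSpace ℝ (Fin n)) with hp
      have hpker : p ∈ f'.ker := (Submodule.orthogonalProjectionOnto (f'.ker) v).2
      have hqmem : v - p ∈ (f'.ker)ᗮ := Submodule.sub_starProjection_mem_orthogonal (K := f'.ker) v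
      clear_value p
      have hfv : ‖f' v‖ ≤ (K : ℝ) * ‖v‖ * ‖v‖ := by
        have h := taylor w hwB
        rw [hfw, hfx] at h
        have heq : (0 : EuclideanSpace ℝ (Fin k)) - 0 - f' (w - x) = -(f' (w - x)) := by
          abel
        rw [heq, norm_neg, ← hv] at h
        exact h
      have hq : ‖v - p‖ ≤ (c : ℝ) * ‖f' v‖ := by
        have h1 := hanti' (v - p) hqmem
        have h2 : f' (v - p) = f' v := by
          rw [map_sub, show f' p = 0 from LinearMap.mem_ker.mp hpker, sub_zero]
        rwa [h2] at h1
      have hzq : ⟪z, v⟫ = ⟪z, v - p⟫ := by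
        have hzp := zker p hpker
        conv_rhs => rw [inner_sub_right]
        rw [hzp, sub_zero]
      calc ⟪z, v⟫ = ⟪z, v - p⟫ := hzq
        _ ≤ ‖z‖ * ‖v - p‖ := real_inner_le_norm z (v - p)
        _ ≤ ‖z‖ * ((c : ℝ) * ‖f' v‖) := by
            exact mul_le_mul_of_nonneg_left hq (norm_nonneg z)
        _ ≤ ‖z‖ * ((c : ℝ) * ((K : ℝ) * ‖v‖ * ‖v‖)) := by
            refine mul_le_mul_of_nonneg_left ?_ (norm_nonneg z)
            exact mul_le_mul_of_nonneg_left hfv (by positivity)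
        _ = C * ‖v‖ ^ 2 := by rw [hC]; ring
    -- choose lambda and conclude
    refine ⟨(2 * (C + 1))⁻¹, by positivity, Metric.ball x r, Metric.ball_mem_nhds x hr, ?_⟩
    set lam : ℝ := (2 * (C + 1))⁻¹ with hlamdef
    have hlam : 0 < lam := by rw [hlamdef]; positivity
    clear_value lam
    rintro w hw
    have hiw := hinner w hw
    set v := w - x with hv
    clear_value v
    have hineq : ‖lam • z‖ ^ 2 ≤ ‖lam • z - v‖ ^ 2 := by
      rw [norm_sub_sq_real]
      have h1 : ⟪lam • z, v⟫ = lam * ⟪z, v⟫ := real_inner_smul_left z v lam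
      have h2 : lam * ⟪z, v⟫ ≤ lam * (C * ‖v‖ ^ 2) :=
        mul_le_mul_of_nonneg_left hiw hlam.le
      have h3 : 2 * (lam * (C * ‖v‖ ^ 2)) ≤ ‖v‖ ^ 2 := by
        have hlamC : 2 * (lam * C) ≤ 1 := by
          have hpos : (0:ℝ) < 2 * (C + 1) := by positivity
          have h1 : lam * (2 * (C + 1)) = 1 := by
            rw [hlamdef]; exact inv_mul_cancel₀ hpos.ne'
          nlinarith [hlam.le, hC0, h1]
        calc 2 * (lam * (C * ‖v‖ ^ 2)) = (2 * (lam * C)) * ‖v‖ ^ 2 := by ring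
          _ ≤ 1 * ‖v‖ ^ 2 := mul_le_mul_of_nonneg_right hlamC (sq_nonneg _)
          _ = ‖v‖ ^ 2 := one_mul _
      linarith [h1, h2, h3]
    have hdisteq : dist (x + lam • z) x = ‖lam • z‖ := by
      simp [dist_eq_norm]
    have hdisteq2 : dist (x + lam • z) w = ‖lam • z - v‖ := by
      rw [dist_eq_norm, hv]
      congr 1
      abel
    rw [hdisteq, hdisteq2]
    have hs := Real.sqrt_le_sqrt hineq
    rwa [Real.sqrt_sq (norm_nonneg _), Real.sqrt_sq (norm_nonneg _)] at hs
end
end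

section
/- Let {S_i}_{i∈I} be a finite, minimally defined collection of affine subspaces of ℝⁿ and U = ⋃_{i∈I} S_i. Then there is a Lebesgue-null set Z ⊆ ℝⁿ (in fact a finite union of proper affine subspaces) such that for every y ∉ Z, the number of ED critical points of y on U equals |I|. -/
open scoped RealInnerProductSpace
open Matrix
open MeasureTheory

noncomputable section

section Aux
variable {E : Type*} [NormedAddCommGroup E] [InnerProductSpace ℝ E] [FiniteDimensional ℝ E]

lemma aux_tangent_sub (T : AffineSubspace ℝ E) {x : E} (hx : x ∈ T) :
    tangentConeAt ℝ (T : Set E) x ⊆ (T.direction : Set E) := by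
  intro w hw
  obtain ⟨c, d, hd0, hd, hcd⟩ := mem_tangentConeAt_iff_exists_seq.mp hw
  have hcl : IsClosed (T.direction : Set E) := T.direction.closed_of_finiteDimensional
  refine hcl.mem_of_tendsto hcd ?_
  filter_upwards [hd] with n hn
  have hdn : d n ∈ T.direction := by
    have := AffineSubspace.vsub_mem_direction hn hx
    simpa [vsub_eq_sub] using this
  exact T.direction.smul_mem _ hdn

lemma aux_sub_tangent (T : AffineSubspace ℝ E) {x : E} (hx : x ∈ T) {w : E}
    (hw : w ∈ T.direction) : w ∈ tangentConeAt ℝ (T : Set E) x := by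
  have h : openSegment ℝ x (x + w) ⊆ (T : Set E) := by
    rw [openSegment_eq_image']
    rintro _ ⟨θ, hθ, rfl⟩
    simp only [add_sub_cancel_left]
    have : θ • w +ᵥ x ∈ T :=
      AffineSubspace.vadd_mem_of_mem_direction (T.direction.smul_mem θ hw) hx
    simpa [vadd_eq_add, add_comm] using this
  simpa using mem_tangentConeAt_of_openSegment_subset h

lemma aux_smooth (A : Set E) (T : AffineSubspace ℝ E) {x : E} (hx : x ∈ T)
    {V : Set E} (hV : IsOpen V) (hxV : x ∈ V) (hAV : A ∩ V = (T : Set E) ∩ V) :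
    SmoothPt A x := by
  have hxA : x ∈ A := by
    have h : x ∈ (T : Set E) ∩ V := ⟨hx, hxV⟩
    rw [← hAV] at h; exact h.1
  set W := T.directionᗮ with hW
  set k := Module.finrank ℝ W with hk
  let b := stdOrthonormalBasis ℝ W
  let L : E →L[ℝ] EuclideanSpace ℝ (Fin k) :=
    ((EuclideanSpace.equiv (Fin k) ℝ).symm.toContinuousLinearMap).comp
      (ContinuousLinearMap.pi fun m => innerSL ℝ ((b m : E)))
  have hLapp : ∀ z m, L z m = ⟪(b m : E), z⟫ := fun z m => rfl
  have hLsub : ∀ z, ∀ m, (L z - L x) m = ⟪(b m : E), z - x⟫ := by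
    intro z m
    have : L z - L x = L (z - x) := (map_sub L z x).symm
    rw [this, hLapp]
  refine ⟨hxA, V, k, fun z => L z - L x, hV, hxV, ?_, ?_, ?_⟩
  · exact (L.contDiff.sub contDiff_const).contDiffOn
  · intro z hz t
    rw [fderivWithin_of_isOpen hV hz, ((L.hasFDerivAt).sub_const (L x)).fderiv]
    refine ⟨∑ m, t m • (b m : E), ?_⟩
    ext m
    rw [hLapp, inner_sum]
    rw [Finset.sum_eq_single_of_mem m (Finset.mem_univ m)]
    · have h1 : ⟪(b m : E), (b m : E)⟫ = 1 := by
        have := b.orthonormal.1 m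
        rw [real_inner_self_eq_norm_sq]
        rw [show ‖(b m : E)‖ = ‖b m‖ from rfl, this]; norm_num
      rw [real_inner_smul_right, h1, mul_one]
    · intro m' _ hm'
      have h0 : ⟪(b m : E), (b m' : E)⟫ = 0 := b.orthonormal.2 (Ne.symm hm')
      rw [real_inner_smul_right, h0, mul_zero]
  · have hTiff : ∀ z, z ∈ (T : Set E) ↔ L z - L x = 0 := by
      intro z
      have h1 : (L z - L x = 0) ↔ ∀ m, ⟪(b m : E), z - x⟫ = 0 := by
        constructor
        · intro h m; rw [← hLsub, h]; rfl
        · intro h; ext m; rw [hLsub]; exact h m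
      have h2 : (∀ m, ⟪(b m : E), z - x⟫ = 0) ↔ (z - x) ∈ Wᗮ := by
        constructor
        · intro h
          rw [Submodule.mem_orthogonal']
          intro u hu
          have hrepr : (⟨u, hu⟩ : W) = ∑ m, b.repr ⟨u, hu⟩ m • b m := (b.sum_repr ⟨u, hu⟩).symm
          have hu' : u = ∑ m, b.repr ⟨u, hu⟩ m • (b m : E) := by
            have := congrArg (Subtype.val) hrepr
            simpa using this
          rw [hu', inner_sum]
          refine Finset.sum_eq_zero fun m _ => ?_
          rw [real_inner_smul_right, real_inner_comm, h m, mul_zero]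
        · intro h m
          exact (Submodule.mem_orthogonal _ _).mp h _ (b m).2
      have h3 : (z - x) ∈ Wᗮ ↔ z ∈ T := by
        rw [hW, Submodule.orthogonal_orthogonal]
        have := AffineSubspace.vsub_right_mem_direction_iff_mem hx z
        rw [vsub_eq_sub] at this
        exact this
      rw [h1, h2, h3]; exact Iff.rfl
    rw [hAV]
    ext z
    simp only [Set.mem_inter_iff, Set.mem_setOf_eq, SetLike.mem_coe]
    constructor
    · rintro ⟨h1, h2⟩; exact ⟨h2, (hTiff z).mp h1⟩
    · rintro ⟨h1, h2⟩; exact ⟨(hTiff z).mpr h2, h1⟩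

end Aux

/-- for a finite minimally defined collection of affine subspaces with union `U`,
there is a Lebesgue-null set `Z` such that every `y ∉ Z` has exactly `|I|` ED critical
points on `U`. -/
theorem card_crit_points_affine_complex {n : ℕ} {ι : Type} [Fintype ι]
    (S : ι → AffineSubspace ℝ (EuclideanSpace ℝ (Fin n)))
    (hne : ∀ i, (S i : Set (EuclideanSpace ℝ (Fin n))).Nonempty)
    (hmin : ∀ i j, i ≠ j →
      ¬ ((S i : Set (EuclideanSpace ℝ (Fin n))) ⊆ (S j : Set (EuclideanSpace ℝ (Fin n))))) :
    ∃ Z : Set (EuclideanSpace ℝ (Fin n)), MeasureTheory.volume Z = 0 ∧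
      ∀ y ∉ Z,
        {x | EDCritPt (⋃ i, (S i : Set (EuclideanSpace ℝ (Fin n)))) y x}.ncard
          = Fintype.card ι := by
  classical
  haveI : ∀ i, Nonempty (S i) := fun i => (hne i).to_subtype
  set E := EuclideanSpace ℝ (Fin n) with hE
  let P : ι → E → E := fun i y => (EuclideanGeometry.orthogonalProjection (S i) y : E)
  let Z : Set E := ⋃ (i) (j) (_ : i ≠ j), (P i) ⁻¹' (S j : Set E)
  have hPmem : ∀ i y, P i y ∈ S i := fun i y =>
    EuclideanGeometry.orthogonalProjection_mem y
  have hPself : ∀ i y, y ∈ S i → P i y = y := fun i y hy => by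
    simp only [P]
    rw [EuclideanGeometry.orthogonalProjection_eq_self_iff]
    exact hy
  refine ⟨Z, ?_, ?_⟩
  · refine measure_iUnion_null fun i => measure_iUnion_null fun j => measure_iUnion_null
      fun hij => ?_
    let Q : E →ᵃ[ℝ] E := ((S i).subtype).comp (EuclideanGeometry.orthogonalProjection (S i))
    have hQ : (P i) ⁻¹' (S j : Set E) = ((S j).comap Q : Set E) := by
      rw [AffineSubspace.coe_comap]; rfl
    rw [hQ]
    refine Measure.addHaar_affineSubspace volume _ ?_
    intro htop
    refine hmin i j hij fun z hz => ?_
    have : z ∈ (S j).comap Q := htop ▸ AffineSubspace.mem_top ℝ E z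
    have hz' : Q z ∈ S j := this
    have : Q z = z := hPself i z hz
    rwa [this] at hz'
  · intro y hy
    have hyZ : ∀ i j, i ≠ j → P i y ∉ (S j : Set E) := by
      intro i j hij hmem
      exact hy (Set.mem_iUnion.mpr ⟨i, Set.mem_iUnion.mpr ⟨j, Set.mem_iUnion.mpr ⟨hij, hmem⟩⟩⟩)
    have hset : {x | EDCritPt (⋃ i, (S i : Set E)) y x} = Set.range (fun i => P i y) := by
      ext x
      simp only [Set.mem_setOf_eq, Set.mem_range]
      constructor
      · rintro ⟨hsm, hnorm⟩
        obtain ⟨i, hxi⟩ : ∃ i, x ∈ S i := by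
          have := hsm.1
          simpa [Set.mem_iUnion] using this
        refine ⟨i, ?_⟩
        have hperp : y - x ∈ (S i).directionᗮ := by
          rw [Submodule.mem_orthogonal']
          intro u hu
          exact hnorm u (tangentConeAt_mono (Set.subset_iUnion _ i)
            (aux_sub_tangent (S i) hxi hu))
        have hpv : EuclideanGeometry.orthogonalProjection (S i) y = ⟨x, hxi⟩ := by
          have hy' : y = (y - x) +ᵥ x := by
            simp [vadd_eq_add, sub_add_cancel]
          rw [hy']
          exact EuclideanGeometry.orthogonalProjection_vadd_eq_self hxi hperp
        exact congrArg Subtype.val hpv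
      · rintro ⟨i, rfl⟩
        have hxi : P i y ∈ S i := hPmem i y
        have hxj : ∀ j, j ≠ i → P i y ∉ (S j : Set E) := fun j hj => hyZ i j (Ne.symm hj)
        let V : Set E := (⋃ (j) (_ : j ≠ i), (S j : Set E))ᶜ
        have hVopen : IsOpen V := by
          refine isOpen_compl_iff.mpr (Set.Finite.isClosed_biUnion (Set.toFinite _)
            fun j _ => ?_)
          exact AffineSubspace.closed_of_finiteDimensional (S j)
        have hxV : P i y ∈ V := by
          simp only [V, Set.mem_compl_iff, Set.mem_iUnion]
          rintro ⟨j, hj, hmem⟩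
          exact hxj j hj hmem
        have hUV : (⋃ k, (S k : Set E)) ∩ V = (S i : Set E) ∩ V := by
          ext z
          simp only [Set.mem_inter_iff, Set.mem_iUnion, V, Set.mem_compl_iff]
          constructor
          · rintro ⟨⟨k, hk⟩, hzV⟩
            refine ⟨?_, hzV⟩
            by_cases hki : k = i
            · exact hki ▸ hk
            · exact absurd ⟨k, hki, hk⟩ hzV
          · rintro ⟨hz, hzV⟩
            exact ⟨⟨i, hz⟩, hzV⟩
        refine ⟨aux_smooth _ (S i) hxi hVopen hxV hUV, ?_⟩
        intro w hw
        have htc : w ∈ (S i).direction := by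
          have h1 : tangentConeAt ℝ (⋃ k, (S k : Set E)) (P i y)
              = tangentConeAt ℝ ((⋃ k, (S k : Set E)) ∩ V) (P i y) :=
            (tangentConeAt_inter_nhds (hVopen.mem_nhds hxV)).symm
          rw [h1, hUV] at hw
          exact aux_tangent_sub (S i) hxi
            (tangentConeAt_mono Set.inter_subset_left hw)
        have hperp : y - P i y ∈ (S i).directionᗮ := by
          have := EuclideanGeometry.vsub_orthogonalProjection_mem_direction_orthogonal (S i) y
          simpa [vsub_eq_sub] using this
        exact (Submodule.mem_orthogonal' _ _).mp hperp w htc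
    rw [hset]
    have hinj : Function.Injective (fun i => P i y) := by
      intro i j hij
      by_contra hne'
      refine hyZ i j hne' ?_
      rw [show P i y = P j y from hij]
      exact hPmem j y
    rw [← Set.image_univ, ← Finset.coe_univ, ← Finset.coe_image, Set.ncard_coe_finset,
      Finset.card_image_of_injective _ hinj, Finset.card_univ]
end
end

section
/- For any y in ℝⁿ and a finite minimally defined collection of affine subspaces {S_i}_{i∈I} with union U, the set of ED critical points of y on U equals the disjoint union over i ∈ I of (proj_{S_i}(y) ∩ U*), where U* is the set of smooth points of U. -/
open scoped RealInnerProductSpace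
open Matrix
open MeasureTheory

noncomputable section

open Filter Metric Set Topology

section AffineComplexAux

variable {E : Type*} [NormedAddCommGroup E] [InnerProductSpace ℝ E] [FiniteDimensional ℝ E]

theorem mem_tc_old {s : Set E} {x v : E} {c : ℕ → ℝ} {d : ℕ → E}
    (hds : ∀ᶠ n in atTop, x + d n ∈ s) (hc : Tendsto (fun n => ‖c n‖) atTop atTop)
    (hcd : Tendsto (fun n => c n • d n) atTop (𝓝 v)) : v ∈ tangentConeAt ℝ s x :=
  mem_tangentConeAt_of_seq atTop c d (tangentConeAt.lim_zero atTop hc hcd) hds hcd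

/-- Every tangent vector to a finite union of affine subspaces lies in the direction of one of
the subspaces containing the base point. -/
theorem tc_union_sub {ι : Type} [Fintype ι] (S : ι → AffineSubspace ℝ E) (x v : E)
    (hv : v ∈ tangentConeAt ℝ (⋃ i, (S i : Set E)) x) :
    ∃ k, x ∈ S k ∧ v ∈ (S k).direction := by
  obtain ⟨c, d, hd0, hd, hlim⟩ := mem_tangentConeAt_iff_exists_seq.1 hv
  have hfreq : ∃ k, ∃ᶠ m in atTop, x + d m ∈ (S k : Set E) := by
    by_contra h
    push_neg at h
    have hall : ∀ᶠ m in atTop, ∀ k, x + d m ∉ (S k : Set E) := eventually_all.2 h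
    obtain ⟨m, hm1, hm2⟩ := (hd.and hall).exists
    obtain ⟨k, hk⟩ := Set.mem_iUnion.1 hm1
    exact hm2 k hk
  obtain ⟨k, hk⟩ := hfreq
  obtain ⟨φ, hφ, hmem⟩ := Filter.extraction_of_frequently_atTop hk
  have hxk : x ∈ S k := by
    have hcl : IsClosed (S k : Set E) := (S k).closed_of_finiteDimensional
    have hx : Tendsto (fun m => x + d (φ m)) atTop (𝓝 x) := by
      have h1 := hd0.comp hφ.tendsto_atTop
      simpa using ((tendsto_const_nhds : Tendsto (fun _ : ℕ => x) atTop (𝓝 x))).add h1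
    exact hcl.mem_of_tendsto hx (Filter.Eventually.of_forall hmem)
  refine ⟨k, hxk, ?_⟩
  have hdir : IsClosed ((S k).direction : Set E) := (S k).direction.closed_of_finiteDimensional
  have hlim' : Tendsto (fun m => c (φ m) • d (φ m)) atTop (𝓝 v) := hlim.comp hφ.tendsto_atTop
  refine hdir.mem_of_tendsto hlim' (Filter.Eventually.of_forall fun m => ?_)
  have hdm : d (φ m) ∈ (S k).direction := by
    simpa using AffineSubspace.vsub_mem_direction (hmem m) hxk
  exact Submodule.smul_mem _ _ hdm

/-- The direction of an affine subspace is contained in its tangent cone at each of its points. -/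
theorem dir_sub_tc (s : AffineSubspace ℝ E) {x : E} (hx : x ∈ s) {v : E}
    (hv : v ∈ s.direction) : v ∈ tangentConeAt ℝ (s : Set E) x := by
  refine mem_tc_old (c := fun m => (m : ℝ) + 1) (d := fun m => ((m : ℝ) + 1)⁻¹ • v) ?_ ?_ ?_
  · refine Filter.Eventually.of_forall fun m => ?_
    have := AffineSubspace.vadd_mem_of_mem_direction
      (Submodule.smul_mem _ (((m : ℝ) + 1)⁻¹) hv) hx
    simpa [add_comm] using this
  · have h1 : Tendsto (fun m : ℕ => (m : ℝ) + 1) atTop atTop :=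
      tendsto_atTop_add_const_right _ 1 tendsto_natCast_atTop_atTop
    exact h1.congr fun m => (Real.norm_of_nonneg (by positivity)).symm
  · have h : ∀ m : ℕ, ((m : ℝ) + 1) • (((m : ℝ) + 1)⁻¹ • v) = v := fun m =>
      smul_inv_smul₀ (by positivity) v
    simpa [h] using (tendsto_const_nhds : Tendsto (fun _ : ℕ => v) atTop (𝓝 v))

/-- If `f` vanishes near `x` on an affine subspace through `x`, its derivative kills the
direction. -/
theorem fderiv_vanish_on_affine {F : Type*} [NormedAddCommGroup F] [NormedSpace ℝ F]
    {f : E → F} {f' : E →L[ℝ] F} {x : E} (hf : HasFDerivAt f f' x)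
    {W : Set E} (hW : IsOpen W) (hxW : x ∈ W) (s : AffineSubspace ℝ E)
    (hzero : ∀ z ∈ (s : Set E), z ∈ W → f z = 0) (hx : x ∈ s)
    {v : E} (hv : v ∈ s.direction) : f' v = 0 := by
  have hγ : HasDerivAt (fun t : ℝ => x + t • v) v 0 := by
    simpa using ((hasDerivAt_id (0 : ℝ)).smul_const v).const_add x
  have hf2 : HasFDerivAt f f' ((fun t : ℝ => x + t • v) 0) := by simpa using hf
  have hcomp : HasDerivAt (fun t : ℝ => f (x + t • v)) (f' v) 0 :=
    hf2.comp_hasDerivAt 0 hγ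
  have hmem : ∀ t : ℝ, x + t • v ∈ (s : Set E) := by
    intro t
    simpa [add_comm] using
      AffineSubspace.vadd_mem_of_mem_direction (Submodule.smul_mem _ t hv) hx
  have heq : (fun t : ℝ => f (x + t • v)) =ᶠ[𝓝 (0 : ℝ)] fun _ => 0 := by
    have hcont : ContinuousAt (fun t : ℝ => x + t • v) 0 := by fun_prop
    have hWev : ∀ᶠ t : ℝ in 𝓝 0, x + t • v ∈ W :=
      hcont.eventually_mem (hW.mem_nhds (by simpa using hxW))
    exact hWev.mono fun t ht => hzero _ (hmem t) ht
  have h0 : HasDerivAt (fun t : ℝ => f (x + t • v)) 0 0 :=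
    (hasDerivAt_const (0 : ℝ) (0 : F)).congr_of_eventuallyEq heq
  exact hcomp.unique h0

set_option maxHeartbeats 1000000 in
/-- Kernel of the derivative of a defining submersion is contained in the tangent cone. -/
theorem ker_sub_tc [CompleteSpace E] {k : ℕ} {f : E → EuclideanSpace ℝ (Fin k)}
    {f' : E →L[ℝ] EuclideanSpace ℝ (Fin k)} {x : E}
    (hf : HasStrictFDerivAt f f' x) (hrange : f'.range = ⊤) (hfx : f x = 0)
    {A : Set E} (hA : ∀ᶠ z in 𝓝 x, f z = 0 → z ∈ A)
    {v : E} (hv : f' v = 0) : v ∈ tangentConeAt ℝ A x := by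
  set g : f'.ker → E := hf.implicitFunction f f' hrange 0 with hgdef
  have hrw : hf.implicitFunction f f' hrange (f x) = g := by rw [hfx]
  have hgd : HasStrictFDerivAt g (f'.ker).subtypeL 0 := by
    have h := hf.to_implicitFunction hrange
    rwa [hrw] at h
  have hg0 : g 0 = x := by
    have h := hf.implicitFunction_apply_image hrange
    rwa [hrw] at h
  have hfg : ∀ᶠ z in 𝓝 (0 : f'.ker), f (g z) = 0 := by
    have h1 := hf.map_implicitFunction_eq hrange
    have ht : Tendsto (fun z : f'.ker =>
        ((f x, z) : EuclideanSpace ℝ (Fin k) × f'.ker)) (𝓝 0) (𝓝 (f x, 0)) :=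
      tendsto_const_nhds.prodMk_nhds tendsto_id
    have h2 := ht.eventually h1
    simpa [hrw, hfx] using h2
  have hgA : ∀ᶠ z in 𝓝 (0 : f'.ker), g z ∈ A := by
    have hgc : Tendsto g (𝓝 0) (𝓝 x) := by
      have := hgd.continuousAt.tendsto
      rwa [hg0] at this
    filter_upwards [hfg, hgc.eventually hA] with z h1 h2
    exact h2 h1
  set vk : f'.ker := ⟨v, hv⟩ with hvk
  have hc : Tendsto (fun m : ℕ => ‖(m : ℝ) + 1‖) atTop atTop := by
    have h1 : Tendsto (fun m : ℕ => (m : ℝ) + 1) atTop atTop :=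
      tendsto_atTop_add_const_right _ 1 tendsto_natCast_atTop_atTop
    exact (h1.congr fun m => (Real.norm_of_nonneg (by positivity)).symm)
  have hlim := hgd.hasFDerivAt.lim vk hc
  refine mem_tc_old (c := fun m => (m : ℝ) + 1) (d := fun m => g (((m : ℝ) + 1)⁻¹ • vk) - x) ?_ hc ?_
  · have ht0 : Tendsto (fun m : ℕ => ((m : ℝ) + 1)⁻¹ • vk) atTop (𝓝 0) := by
      have h1 : Tendsto (fun m : ℕ => ((m : ℝ) + 1)⁻¹) atTop (𝓝 0) := by
        have := tendsto_inv_atTop_zero.comp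
          (tendsto_atTop_add_const_right atTop 1 (tendsto_natCast_atTop_atTop (R := ℝ)))
        exact this
      simpa using h1.smul_const vk
    filter_upwards [ht0.eventually hgA] with m hm
    simpa using hm
  · have : ∀ m : ℕ, ((m : ℝ) + 1) • (g ((0 : f'.ker) + ((m : ℝ) + 1)⁻¹ • vk) - g 0)
        = ((m : ℝ) + 1) • (g (((m : ℝ) + 1)⁻¹ • vk) - x) := by
      intro m; rw [zero_add, hg0]
    have hlim2 := hlim.congr this
    simpa using hlim2

theorem affine_le_of_dir {s t : AffineSubspace ℝ E} {x : E} (hxs : x ∈ s) (hxt : x ∈ t)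
    (h : ∀ v ∈ s.direction, v ∈ t.direction) : (s : Set E) ⊆ (t : Set E) := by
  intro z hz
  have := AffineSubspace.vadd_mem_of_mem_direction
    (h _ (AffineSubspace.vsub_mem_direction hz hxs)) hxt
  simpa using this

/-- Membership in the metric projection onto a nonempty affine subspace is equivalent to
membership plus orthogonality of the residual to the direction. -/
theorem projSet_iff_orth' {E : Type*} [NormedAddCommGroup E] [InnerProductSpace ℝ E]
    (s : AffineSubspace ℝ E) (hs : (s : Set E).Nonempty) (y x : E) :
    x ∈ projSet (s : Set E) y ↔ x ∈ s ∧ ∀ v ∈ s.direction, ⟪y - x, v⟫ = 0 := by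
  constructor
  · rintro ⟨hxs, hdist⟩
    refine ⟨hxs, fun v hv => ?_⟩
    have key : ∀ t : ℝ, 0 ≤ ‖v‖ ^ 2 * (t * t) + (-2 * ⟪y - x, v⟫) * t + 0 := by
      intro t
      have hmem : x + t • v ∈ (s : Set E) := by
        simpa [add_comm] using
          AffineSubspace.vadd_mem_of_mem_direction (Submodule.smul_mem _ t hv) hxs
      have h1 : dist y x ≤ dist y (x + t • v) := by
        rw [hdist]; exact Metric.infDist_le_dist_of_mem hmem
      rw [dist_eq_norm, dist_eq_norm] at h1
      have harg : y - (x + t • v) = (y - x) - t • v := by abel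
      rw [harg] at h1
      have h2 : ‖y - x‖ ^ 2 ≤ ‖(y - x) - t • v‖ ^ 2 :=
        pow_le_pow_left₀ (norm_nonneg _) h1 2
      have hrhs : ‖(y - x) - t • v‖ ^ 2
          = ‖y - x‖ ^ 2 - 2 * ⟪y - x, t • v⟫ + ‖t • v‖ ^ 2 := norm_sub_sq_real _ _
      have h3 : ‖t • v‖ ^ 2 = t ^ 2 * ‖v‖ ^ 2 := by
        rw [norm_smul]; simp [mul_pow, sq_abs]
      rw [hrhs, real_inner_smul_right, h3] at h2
      nlinarith [h2]
    have hd := discrim_le_zero key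
    rw [discrim] at hd
    have hc2 : ⟪y - x, v⟫ ^ 2 ≤ 0 := by nlinarith [hd]
    exact pow_eq_zero_iff two_ne_zero |>.1 (le_antisymm hc2 (sq_nonneg _))
  · rintro ⟨hxs, horth⟩
    refine ⟨hxs, le_antisymm ?_ (Metric.infDist_le_dist_of_mem hxs)⟩
    haveI := hs.to_subtype
    rw [Metric.infDist_eq_iInf]
    refine le_ciInf fun z => ?_
    have hdir : (z : E) - x ∈ s.direction := by
      simpa using AffineSubspace.vsub_mem_direction z.2 hxs
    have hinner := horth _ hdir
    have hexp : ‖(y - x) - ((z : E) - x)‖ = ‖y - (z : E)‖ := by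
      rw [sub_sub_sub_cancel_right]
    have hsq : ‖y - x‖ ^ 2 ≤ ‖y - (z : E)‖ ^ 2 := by
      have hrhs : ‖(y - x) - ((z : E) - x)‖ ^ 2
          = ‖y - x‖ ^ 2 - 2 * ⟪y - x, (z : E) - x⟫ + ‖(z : E) - x‖ ^ 2 := norm_sub_sq_real _ _
      rw [← hexp, hrhs, hinner]
      nlinarith [sq_nonneg ‖(z : E) - x‖]
    have hle := Real.sqrt_le_sqrt hsq
    rw [Real.sqrt_sq (norm_nonneg _), Real.sqrt_sq (norm_nonneg _)] at hle
    rw [dist_eq_norm, dist_eq_norm]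
    exact hle
/-- At a smooth point of a minimally defined affine complex, the point lies on exactly one
piece, and the tangent cone is contained in the direction of that piece. -/
theorem smooth_pt_unique {n : ℕ} {ι : Type} [Fintype ι]
    (S : ι → AffineSubspace ℝ (EuclideanSpace ℝ (Fin n)))
    (hmin : ∀ i j, i ≠ j → ¬ ((S i : Set (EuclideanSpace ℝ (Fin n)))
      ⊆ (S j : Set (EuclideanSpace ℝ (Fin n)))))
    {x : EuclideanSpace ℝ (Fin n)}
    (hsm : SmoothPt (⋃ i, (S i : Set (EuclideanSpace ℝ (Fin n)))) x)
    {i : ι} (hi : x ∈ S i) :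
    (∀ j, x ∈ S j → j = i) ∧
      ∀ v ∈ tangentConeAt ℝ (⋃ i, (S i : Set (EuclideanSpace ℝ (Fin n)))) x,
        v ∈ (S i).direction := by
  obtain ⟨hxU, W, k, f, hW, hxW, hcd, hsurj, hM⟩ := hsm
  have hfx : f x = 0 := by
    have hx2 : x ∈ (⋃ i, (S i : Set (EuclideanSpace ℝ (Fin n)))) ∩ W := ⟨hxU, hxW⟩
    rw [hM] at hx2; exact hx2.2
  have hca : ContDiffAt ℝ 2 f x := hcd.contDiffAt (hW.mem_nhds hxW)
  have hst : HasStrictFDerivAt f (fderiv ℝ f x) x := hca.hasStrictFDerivAt (by norm_num)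
  set f' := fderiv ℝ f x with hf'def
  have hrange : f'.range = ⊤ := by
    rw [LinearMap.range_eq_top]
    have h := hsurj x hxW
    rwa [fderivWithin_of_isOpen hW hxW] at h
  have hA : ∀ᶠ z in 𝓝 x, f z = 0 → z ∈ ⋃ i, (S i : Set (EuclideanSpace ℝ (Fin n))) := by
    filter_upwards [hW.mem_nhds hxW] with z hz hfz
    have hz2 : z ∈ {z ∈ W | f z = 0} := ⟨hz, hfz⟩
    rw [← hM] at hz2; exact hz2.1
  have hker : ∀ v, f' v = 0 → v ∈ tangentConeAt ℝ
      (⋃ i, (S i : Set (EuclideanSpace ℝ (Fin n)))) x :=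
    fun v hv => ker_sub_tc hst hrange hfx hA hv
  have hdk : ∀ j, x ∈ S j → ∀ v ∈ (S j).direction, f' v = 0 := by
    intro j hj v hv
    refine fderiv_vanish_on_affine hst.hasFDerivAt hW hxW (S j) ?_ hj hv
    intro z hzs hzW
    have hz2 : z ∈ (⋃ i, (S i : Set (EuclideanSpace ℝ (Fin n)))) ∩ W :=
      ⟨Set.mem_iUnion.2 ⟨j, hzs⟩, hzW⟩
    rw [hM] at hz2; exact hz2.2
  haveI : Finite {j // x ∈ S j} := Subtype.finite
  have hcover : (⋃ k : {j // x ∈ S j},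
      (((S k.1).direction.comap (f'.ker).subtype : Submodule ℝ (f'.ker)) :
        Set (f'.ker))) = Set.univ := by
    ext v
    simp only [Set.mem_iUnion, Set.mem_univ, iff_true, SetLike.mem_coe, Submodule.mem_comap]
    obtain ⟨j, hj, hvj⟩ := tc_union_sub S x (v : EuclideanSpace ℝ (Fin n)) (hker _ v.2)
    exact ⟨⟨j, hj⟩, hvj⟩
  obtain ⟨k0, hk0⟩ := Subspace.exists_eq_top_of_iUnion_eq_univ hcover
  have hKle : ∀ v, f' v = 0 → v ∈ (S k0.1).direction := by
    intro v hv
    have hmem : (⟨v, hv⟩ : f'.ker) ∈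
        ((S k0.1).direction.comap (f'.ker).subtype) := by
      rw [hk0]; trivial
    exact hmem
  have huniq : ∀ j, x ∈ S j → j = k0.1 := by
    intro j hj
    by_contra hne
    exact hmin j k0.1 hne (affine_le_of_dir hj k0.2 fun v hv => hKle v (hdk j hj v hv))
  have hik : i = k0.1 := huniq i hi
  refine ⟨fun j hj => by rw [huniq j hj, ← hik], fun v hv => ?_⟩
  obtain ⟨j, hj, hvj⟩ := tc_union_sub S x v hv
  rwa [huniq j hj, ← hik] at hvj


end AffineComplexAux

/-- the ED critical points of `y` on a minimally defined affine complex `U`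
are the disjoint union over `i` of `proj_{S i}(y) ∩ U*`, where `U*` is the set of
smooth points of `U`. -/
theorem crit_points_affine_complex_eq_union {n : ℕ} {ι : Type} [Fintype ι]
    (S : ι → AffineSubspace ℝ (EuclideanSpace ℝ (Fin n)))
    (hne : ∀ i, (S i : Set (EuclideanSpace ℝ (Fin n))).Nonempty)
    (hmin : ∀ i j, i ≠ j →
      ¬ ((S i : Set (EuclideanSpace ℝ (Fin n))) ⊆ (S j : Set (EuclideanSpace ℝ (Fin n)))))
    (y : EuclideanSpace ℝ (Fin n)) :
    ({x | EDCritPt (⋃ i, (S i : Set (EuclideanSpace ℝ (Fin n)))) y x}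
      = ⋃ i, (projSet (S i : Set (EuclideanSpace ℝ (Fin n))) y ∩
          {x | SmoothPt (⋃ i, (S i : Set (EuclideanSpace ℝ (Fin n)))) x})) ∧
    (∀ i j, i ≠ j →
      Disjoint
        (projSet (S i : Set (EuclideanSpace ℝ (Fin n))) y ∩
          {x | SmoothPt (⋃ i, (S i : Set (EuclideanSpace ℝ (Fin n)))) x})
        (projSet (S j : Set (EuclideanSpace ℝ (Fin n))) y ∩
          {x | SmoothPt (⋃ i, (S i : Set (EuclideanSpace ℝ (Fin n)))) x})) := by
  constructor
  · ext x
    simp only [Set.mem_setOf_eq, Set.mem_iUnion, Set.mem_inter_iff]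
    constructor
    · rintro ⟨hsm, hnorm⟩
      obtain ⟨i, hi⟩ := Set.mem_iUnion.1 hsm.1
      refine ⟨i, ?_, hsm⟩
      rw [projSet_iff_orth' _ (hne i)]
      refine ⟨hi, fun v hv => ?_⟩
      exact hnorm _ (tangentConeAt_mono (Set.subset_iUnion _ i) (dir_sub_tc _ hi hv))
    · rintro ⟨i, hproj, hsm⟩
      obtain ⟨hxs, horth⟩ := (projSet_iff_orth' _ (hne i) y x).1 hproj
      refine ⟨hsm, fun w hw => ?_⟩
      exact horth w ((smooth_pt_unique S hmin hsm hxs).2 w hw)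
  · intro i j hij
    rw [Set.disjoint_left]
    rintro x ⟨hpi, hsm⟩ ⟨hpj, -⟩
    exact hij ((smooth_pt_unique S hmin hsm hpi.1).1 j hpj.1).symm
end
end

section
/- Fix integers 1 ≤ k ≤ n, and let E_{n,k} be the set of points in ℝⁿ having exactly k coordinates nonzero with all these nonzero coordinates equal in absolute value, together with points with the corresponding coordinates zero (i.e., k coordinates equal up to sign, the other n−k zero). Then E_{n,k} is a union of 2^{k−1}·C(n,k) lines/linear subspaces forming a minimally defined collection, and for almost every y ∈ ℝⁿ the number of ED critical points of y on E_{n,k} equals 2^{k−1}·C(n,k). -/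
open scoped RealInnerProductSpace
open Matrix
open MeasureTheory

noncomputable section

/-- The set `E_{n,k}`: `k` coordinates equal up to sign, the rest zero. -/
def Enk (n k : ℕ) : Set (EuclideanSpace ℝ (Fin n)) :=
  {x | ∃ A : Finset (Fin n), A.card = k ∧ ∃ t : ℝ, 0 ≤ t ∧ ∃ ε : Fin n → ℝ,
        IsSignFn ε ∧ ∀ i, x i = if i ∈ A then ε i * t else 0}

namespace CritEnkAux

open Finset Filter Topology

variable {n : ℕ}

open Classical in
/-- `A` minus its minimum element. -/
def eMin (A : Finset (Fin n)) : Finset (Fin n) :=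
  A.filter (fun i => A.min ≠ (i : WithBot (Fin n)))

lemma eMin_eq (A : Finset (Fin n)) (h : A.Nonempty) : eMin A = A.erase (A.min' h) := by
  ext i
  simp only [eMin, mem_filter, mem_erase, ← Finset.coe_min' h, ne_eq, WithBot.coe_inj]
  constructor
  · rintro ⟨h1, h2⟩
    exact ⟨fun hh => h2 (congrArg _ hh.symm), h1⟩
  · rintro ⟨h1, h2⟩
    refine ⟨h2, fun hh => h1 ?_⟩
    have : A.min' h = i := WithBot.coe_inj.1 hh
    exact this.symm

/-- The sign vector supported on `A`, with `-1` exactly on `T`. -/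
def sv (A T : Finset (Fin n)) : EuclideanSpace ℝ (Fin n) :=
  WithLp.toLp 2 (fun i => if i ∈ A then (if i ∈ T then (-1:ℝ) else 1) else 0)

lemma sv_ne_zero_iff (A T : Finset (Fin n)) (i : Fin n) : sv A T i ≠ 0 ↔ i ∈ A := by
  by_cases hA : i ∈ A <;> by_cases hT : i ∈ T <;> simp [sv, hA, hT]

lemma sv_ne_zero {A T : Finset (Fin n)} (h : A.Nonempty) : sv A T ≠ 0 := by
  obtain ⟨i, hi⟩ := h
  intro hc
  have : sv A T i = 0 := by rw [hc]; rfl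
  exact ((sv_ne_zero_iff A T i).2 hi) this

/-- Index set: pairs `(A, T)` with `|A| = k` and `T ⊆ A` avoiding the minimum of `A`. -/
def idx (n k : ℕ) : Finset (Finset (Fin n) × Finset (Fin n)) :=
  (Finset.powersetCard k (Finset.univ : Finset (Fin n))).biUnion
    (fun A => ((eMin A).powerset).image (fun T => (A, T)))

lemma mem_idx {k : ℕ} {p : Finset (Fin n) × Finset (Fin n)} :
    p ∈ idx n k ↔ p.1.card = k ∧ p.2 ⊆ eMin p.1 := by
  constructor
  · intro hp
    simp only [idx, mem_biUnion, mem_image, mem_powerset, mem_powersetCard_univ] at hp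
    obtain ⟨A, hA, T, hT, rfl⟩ := hp
    exact ⟨hA, hT⟩
  · rintro ⟨h1, h2⟩
    simp only [idx, mem_biUnion, mem_image, mem_powerset, mem_powersetCard_univ]
    exact ⟨p.1, h1, p.2, h2, rfl⟩

lemma nonempty_of_mem_idx {k : ℕ} (hk : 1 ≤ k) {p : Finset (Fin n) × Finset (Fin n)}
    (hp : p ∈ idx n k) : p.1.Nonempty := by
  rw [← Finset.card_pos, (mem_idx.1 hp).1]; omega

lemma card_idx {k : ℕ} (hk : 1 ≤ k) : (idx n k).card = 2 ^ (k - 1) * Nat.choose n k := by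
  rw [idx, Finset.card_biUnion]
  · have : ∀ A ∈ Finset.powersetCard k (Finset.univ : Finset (Fin n)),
        (((eMin A).powerset).image (fun T => (A, T))).card = 2 ^ (k - 1) := by
      intro A hA
      rw [Finset.card_image_of_injective _ (Prod.mk_right_injective A), Finset.card_powerset]
      have hAk : A.card = k := mem_powersetCard_univ.1 hA
      have hne : A.Nonempty := by rw [← Finset.card_pos, hAk]; omega
      rw [eMin_eq A hne, Finset.card_erase_of_mem (A.min'_mem hne), hAk]
    rw [Finset.sum_congr rfl this, Finset.sum_const, Finset.card_powersetCard,
      Finset.card_univ, Fintype.card_fin, smul_eq_mul, mul_comm]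
  · intro A hA B hB hAB
    rw [Function.onFun, Finset.disjoint_left]
    intro p hp hq
    simp only [mem_image] at hp hq
    obtain ⟨T, _, rfl⟩ := hp
    obtain ⟨T', _, h'⟩ := hq
    exact hAB ((Prod.ext_iff.1 h').1.symm)

/-- The sign vector of an index. -/
def svp (p : Finset (Fin n) × Finset (Fin n)) : EuclideanSpace ℝ (Fin n) := sv p.1 p.2

/-- The line spanned by an index's sign vector. -/
def lineOf (p : Finset (Fin n) × Finset (Fin n)) : Submodule ℝ (EuclideanSpace ℝ (Fin n)) :=
  Submodule.span ℝ {svp p}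

lemma svp_mem_lineOf (p : Finset (Fin n) × Finset (Fin n)) : svp p ∈ lineOf p :=
  Submodule.mem_span_singleton_self _

lemma min_not_mem_snd {k : ℕ} (hk : 1 ≤ k) {p : Finset (Fin n) × Finset (Fin n)}
    (hp : p ∈ idx n k) : p.1.min' (nonempty_of_mem_idx hk hp) ∉ p.2 := by
  intro hc
  have h2 := (mem_idx.1 hp).2 hc
  rw [eMin_eq p.1 (nonempty_of_mem_idx hk hp)] at h2
  exact (Finset.mem_erase.1 h2).1 rfl

lemma svp_min {k : ℕ} (hk : 1 ≤ k) {p : Finset (Fin n) × Finset (Fin n)} (hp : p ∈ idx n k) :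
    svp p (p.1.min' (nonempty_of_mem_idx hk hp)) = 1 := by
  have h1 := p.1.min'_mem (nonempty_of_mem_idx hk hp)
  have h2 := min_not_mem_snd hk hp
  simp [svp, sv, h1, h2]

lemma line_injOn {k : ℕ} (hk : 1 ≤ k) {p q : Finset (Fin n) × Finset (Fin n)}
    (hp : p ∈ idx n k) (hq : q ∈ idx n k) (h : lineOf p = lineOf q) : p = q := by
  have hpAne := nonempty_of_mem_idx hk hp
  have hqAne := nonempty_of_mem_idx hk hq
  have hmem : svp p ∈ lineOf q := h ▸ svp_mem_lineOf p
  obtain ⟨c, hc⟩ := Submodule.mem_span_singleton.1 hmem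
  have hcf : ∀ i, c * svp q i = svp p i := by
    intro i
    have := congrArg (fun v => v i) hc
    simpa using this
  have hc0 : c ≠ 0 := by
    rintro rfl
    apply sv_ne_zero (T := p.2) hpAne
    ext i
    show svp p i = (0 : EuclideanSpace ℝ (Fin n)) i
    have := (hcf i).symm
    simpa using this
  have hsvz : ∀ i, svp p i = 0 ↔ svp q i = 0 := by
    intro i
    constructor
    · intro hz
      have := hcf i
      rw [hz] at this
      rcases mul_eq_zero.1 this with h' | h'
      · exact absurd h' hc0
      · exact h'
    · intro hz
      have := hcf i
      rw [hz, mul_zero] at this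
      exact this.symm
  have hAeq : p.1 = q.1 := by
    ext i
    rw [← sv_ne_zero_iff p.1 p.2 i, ← sv_ne_zero_iff q.1 q.2 i]
    exact not_congr (hsvz i)
  have hminq := svp_min hk hq
  have hminp := svp_min hk hp
  have hmm : p.1.min' hpAne = q.1.min' hqAne := by congr 1
  have hc1 : c = 1 := by
    have := hcf (p.1.min' hpAne)
    rw [hminp, hmm, hminq, mul_one] at this
    exact this
  subst hc1
  have hsv : ∀ i, svp q i = svp p i := by simpa using hcf
  have hTeq : p.2 = q.2 := by
    have hTp : p.2 ⊆ p.1 := fun i hi => by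
      have := (mem_idx.1 hp).2 hi
      classical exact Finset.filter_subset _ _ this
    have hTq : q.2 ⊆ q.1 := fun i hi => by
      have := (mem_idx.1 hq).2 hi
      classical exact Finset.filter_subset _ _ this
    ext i
    constructor
    · intro hi
      have hiA : i ∈ p.1 := hTp hi
      have h1 : svp p i = -1 := by simp [svp, sv, hiA, hi]
      by_contra hiq
      have h2 : svp q i = 1 := by simp [svp, sv, hAeq ▸ hiA, hiq]
      rw [hsv i, h1] at h2; norm_num at h2
    · intro hi
      have hiA : i ∈ q.1 := hTq hi
      have h1 : svp q i = -1 := by simp [svp, sv, hiA, hi]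
      by_contra hip
      have h2 : svp p i = 1 := by simp [svp, sv, hAeq.symm ▸ hiA, hip]
      rw [← hsv i, h1] at h2; norm_num at h2
  exact Prod.ext hAeq hTeq

lemma union_lines {k : ℕ} (hk : 1 ≤ k) (hkn : k ≤ n) :
    (⋃ p ∈ idx n k, (lineOf p : Set (EuclideanSpace ℝ (Fin n)))) = Enk n k := by
  ext x
  simp only [Set.mem_iUnion, SetLike.mem_coe]
  constructor
  · rintro ⟨p, hp, hx⟩
    obtain ⟨c, hc⟩ := Submodule.mem_span_singleton.1 hx
    obtain ⟨hcard, hT⟩ := mem_idx.1 hp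
    refine ⟨p.1, hcard, |c|, abs_nonneg c,
      fun i => (if c < 0 then (-1:ℝ) else 1) * (if i ∈ p.1 then (if i ∈ p.2 then -1 else 1) else 1),
      ?_, ?_⟩
    · intro i
      by_cases h1 : c < 0 <;> by_cases h2 : i ∈ p.1 <;> by_cases h3 : i ∈ p.2 <;>
        simp [h1, h2, h3]
    · intro i
      have hxi : x i = c * svp p i := by
        have := congrArg (fun v => v i) hc
        simpa using this.symm
      by_cases h2 : i ∈ p.1
      · by_cases h3 : i ∈ p.2 <;> by_cases h1 : c < 0
        · rw [hxi]; simp [svp, sv, h1, h2, h3, abs_of_neg h1] <;> ring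
        · rw [hxi]; simp [svp, sv, h1, h2, h3, abs_of_nonneg (not_lt.1 h1)] <;> ring
        · rw [hxi]; simp [svp, sv, h1, h2, h3, abs_of_neg h1] <;> ring
        · rw [hxi]; simp [svp, sv, h1, h2, h3, abs_of_nonneg (not_lt.1 h1)] <;> ring
      · simp [hxi, svp, sv, h2]
  · rintro ⟨A, hcard, t, ht, ε, hε, hx⟩
    have hAne : A.Nonempty := by rw [← Finset.card_pos, hcard]; omega
    set m := A.min' hAne with hm
    have hmA : m ∈ A := A.min'_mem hAne
    rcases hε m with hεm | hεm
    · -- ε m = 1 : x = t • sv A T  with T = {i ∈ eMin A | ε i = -1}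
      set T := (eMin A).filter (fun i => ε i = -1) with hTdef
      refine ⟨(A, T), mem_idx.2 ⟨hcard, Finset.filter_subset _ _⟩,
        Submodule.mem_span_singleton.2 ⟨t, ?_⟩⟩
      ext i
      show t * sv A T i = x i
      rw [hx i]
      by_cases hiA : i ∈ A
      · simp only [sv, hiA, if_true]
        by_cases hiT : i ∈ T
        · have : ε i = -1 := (Finset.mem_filter.1 hiT).2
          simp [hiT, this] <;> ring
        · have hεi : ε i = 1 := by
            rcases hε i with h | h
            · exact h
            · by_cases him : i = m
              · subst him; exact hεm
              · exfalso; apply hiT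
                rw [hTdef, Finset.mem_filter, eMin_eq A hAne]
                exact ⟨Finset.mem_erase.2 ⟨him, hiA⟩, h⟩
          simp [hiT, hεi] <;> ring
      · simp [sv, hiA]
    · -- ε m = -1 : x = (-t) • sv A T with T = {i ∈ eMin A | ε i = 1}
      set T := (eMin A).filter (fun i => ε i = 1) with hTdef
      refine ⟨(A, T), mem_idx.2 ⟨hcard, Finset.filter_subset _ _⟩,
        Submodule.mem_span_singleton.2 ⟨-t, ?_⟩⟩
      ext i
      show (-t) * sv A T i = x i
      rw [hx i]
      by_cases hiA : i ∈ A
      · simp only [sv, hiA, if_true]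
        by_cases hiT : i ∈ T
        · have : ε i = 1 := (Finset.mem_filter.1 hiT).2
          simp [hiT, this] <;> ring
        · have hεi : ε i = -1 := by
            rcases hε i with h | h
            · by_cases him : i = m
              · subst him; exact hεm
              · exfalso; apply hiT
                rw [hTdef, Finset.mem_filter, eMin_eq A hAne]
                exact ⟨Finset.mem_erase.2 ⟨him, hiA⟩, h⟩
            · exact h
          simp [hiT, hεi] <;> ring
      · simp [sv, hiA]

lemma mem_tangentCone_of_ray {S : Set (EuclideanSpace ℝ (Fin n))}
    {x w : EuclideanSpace ℝ (Fin n)}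
    (h : ∀ m : ℕ, x + ((m : ℝ) + 1)⁻¹ • w ∈ S) : w ∈ tangentConeAt ℝ S x := by
  suffices hs : Tendsto (fun m : ℕ => ‖(m : ℝ) + 1‖) atTop atTop ∧
      Tendsto (fun m : ℕ => ((m : ℝ) + 1) • (((m : ℝ) + 1)⁻¹ • w)) atTop (𝓝 w) from
    mem_tangentConeAt_of_seq atTop _ _ (tangentConeAt.lim_zero atTop hs.1 hs.2)
      (Filter.Eventually.of_forall h) hs.2
  refine ⟨?_, ?_⟩
  · have h1 : Tendsto (fun m : ℕ => (m : ℝ) + 1) atTop atTop :=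
      tendsto_atTop_add_const_right _ 1 tendsto_natCast_atTop_atTop
    simp only [Real.norm_eq_abs]
    exact tendsto_atTop_mono (fun m => le_abs_self _) h1
  · have heq : ∀ m : ℕ, ((m : ℝ) + 1) • (((m : ℝ) + 1)⁻¹ • w) = w := by
      intro m
      rw [smul_smul, mul_inv_cancel₀ (by positivity), one_smul]
    exact tendsto_const_nhds.congr (fun m => (heq m).symm)

lemma lineOf_subset_Enk {k : ℕ} (hk : 1 ≤ k) (hkn : k ≤ n)
    {p : Finset (Fin n) × Finset (Fin n)} (hp : p ∈ idx n k) :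
    (lineOf p : Set (EuclideanSpace ℝ (Fin n))) ⊆ Enk n k := by
  rw [← union_lines hk hkn]
  intro z hz
  exact Set.mem_biUnion hp hz

lemma mem_line_unique {k : ℕ} (hk : 1 ≤ k) {x : EuclideanSpace ℝ (Fin n)} (hx0 : x ≠ 0)
    {p q : Finset (Fin n) × Finset (Fin n)} (hp : p ∈ idx n k) (hq : q ∈ idx n k)
    (hxp : x ∈ lineOf p) (hxq : x ∈ lineOf q) : p = q := by
  obtain ⟨c, hc⟩ := Submodule.mem_span_singleton.1 hxp
  obtain ⟨c', hc'⟩ := Submodule.mem_span_singleton.1 hxq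
  have hc0 : c ≠ 0 := by rintro rfl; rw [zero_smul] at hc; exact hx0 hc.symm
  have hc'0 : c' ≠ 0 := by rintro rfl; rw [zero_smul] at hc'; exact hx0 hc'.symm
  apply line_injOn hk hp hq
  have h1 : svp p = (c⁻¹ * c') • svp q := by
    rw [mul_smul, hc', ← hc, inv_smul_smul₀ hc0]
  have hcc' : c⁻¹ * c' ≠ 0 := mul_ne_zero (inv_ne_zero hc0) hc'0
  rw [lineOf, h1, Submodule.span_singleton_smul_eq (isUnit_iff_ne_zero.2 hcc') _]
  rfl

lemma not_mem_other {k : ℕ} (hk : 1 ≤ k) {x : EuclideanSpace ℝ (Fin n)} (hx0 : x ≠ 0)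
    {p : Finset (Fin n) × Finset (Fin n)} (hp : p ∈ idx n k) (hxp : x ∈ lineOf p) :
    x ∉ ⋃ q ∈ (idx n k).erase p, (lineOf q : Set (EuclideanSpace ℝ (Fin n))) := by
  intro hxc
  simp only [Set.mem_iUnion, SetLike.mem_coe] at hxc
  obtain ⟨q, hq, hxq⟩ := hxc
  have hq' : q ∈ idx n k := Finset.mem_of_mem_erase hq
  exact (Finset.mem_erase.1 hq).1 (mem_line_unique hk hx0 hp hq' hxp hxq).symm

lemma closed_other {k : ℕ} (p : Finset (Fin n) × Finset (Fin n)) :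
    IsClosed (⋃ q ∈ (idx n k).erase p, (lineOf q : Set (EuclideanSpace ℝ (Fin n)))) := by
  apply Set.Finite.isClosed_biUnion (Finset.finite_toSet _)
  intro q _
  exact (lineOf q).closed_of_finiteDimensional

lemma mem_line_of_mem_Enk {k : ℕ} (hk : 1 ≤ k) (hkn : k ≤ n)
    {p : Finset (Fin n) × Finset (Fin n)} (hp : p ∈ idx n k)
    {z : EuclideanSpace ℝ (Fin n)}
    (hzU : z ∉ ⋃ q ∈ (idx n k).erase p, (lineOf q : Set (EuclideanSpace ℝ (Fin n))))
    (hzS : z ∈ Enk n k) : z ∈ lineOf p := by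
  rw [← union_lines hk hkn] at hzS
  simp only [Set.mem_iUnion, SetLike.mem_coe] at hzS
  obtain ⟨q, hq, hzq⟩ := hzS
  by_cases hpq : q = p
  · exact hpq ▸ hzq
  · exact absurd (Set.mem_biUnion (Finset.mem_erase.2 ⟨hpq, hq⟩) hzq) hzU

lemma smooth_of_line {k : ℕ} (hk : 1 ≤ k) (hkn : k ≤ n)
    {p : Finset (Fin n) × Finset (Fin n)} (hp : p ∈ idx n k)
    {x : EuclideanSpace ℝ (Fin n)} (hx : x ∈ lineOf p) (hx0 : x ≠ 0) :
    SmoothPt (Enk n k) x := by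
  classical
  set C : Set (EuclideanSpace ℝ (Fin n)) :=
    ⋃ q ∈ (idx n k).erase p, (lineOf q : Set (EuclideanSpace ℝ (Fin n))) with hC
  have hCc : IsClosed C := closed_other (k := k) p
  have hxC : x ∈ Cᶜ := not_mem_other hk hx0 hp hx
  set W := (lineOf p)ᗮ with hW
  set B := (stdOrthonormalBasis ℝ W).repr with hB
  set L : EuclideanSpace ℝ (Fin n) →L[ℝ] EuclideanSpace ℝ (Fin (Module.finrank ℝ W)) :=
    (B.toContinuousLinearEquiv : W ≃L[ℝ] _).toContinuousLinearMap.comp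
      (Submodule.orthogonalProjectionOnto W) with hL
  have hLz : ∀ z, L z = B (Submodule.orthogonalProjectionOnto W z) := fun z => rfl
  have hzV : ∀ z, (L z = 0 ↔ z ∈ lineOf p) := by
    intro z
    rw [hLz]
    constructor
    · intro hz
      have h0 : Submodule.orthogonalProjectionOnto W z = 0 := by
        apply B.injective
        rw [hz, map_zero]
      have := Submodule.orthogonalProjectionOnto_eq_zero_iff.1 h0
      rwa [hW, Submodule.orthogonal_orthogonal] at this
    · intro hz
      have : Submodule.orthogonalProjectionOnto W z = 0 := by
        apply Submodule.orthogonalProjectionOnto_eq_zero_iff.2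
        rw [hW, Submodule.orthogonal_orthogonal]
        exact hz
      rw [this, map_zero]
  refine ⟨lineOf_subset_Enk hk hkn hp hx, Cᶜ, Module.finrank ℝ W, ⇑L,
    hCc.isOpen_compl, hxC, L.contDiff.contDiffOn, ?_, ?_⟩
  · intro z hz
    rw [fderivWithin_of_isOpen hCc.isOpen_compl hz, L.fderiv]
    intro u
    refine ⟨((B.symm u : W) : EuclideanSpace ℝ (Fin n)), ?_⟩
    rw [hLz, Submodule.orthogonalProjectionOnto_mem_subspace_eq_self]
    simp
  · ext z
    simp only [Set.mem_inter_iff, Set.mem_setOf_eq]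
    constructor
    · rintro ⟨hzS, hzU⟩
      exact ⟨hzU, (hzV z).2 (mem_line_of_mem_Enk hk hkn hp hzU hzS)⟩
    · rintro ⟨hzU, hzL⟩
      exact ⟨lineOf_subset_Enk hk hkn hp ((hzV z).1 hzL), hzU⟩

lemma tangent_subset {k : ℕ} (hk : 1 ≤ k) (hkn : k ≤ n)
    {p : Finset (Fin n) × Finset (Fin n)} (hp : p ∈ idx n k)
    {x : EuclideanSpace ℝ (Fin n)} (hx : x ∈ lineOf p) (hx0 : x ≠ 0) :
    tangentConeAt ℝ (Enk n k) x ⊆ (lineOf p : Set (EuclideanSpace ℝ (Fin n))) := by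
  intro w hw
  obtain ⟨c, d, hd0', hd, hcd⟩ := mem_tangentConeAt_iff_exists_seq.1 hw
  have hd0 : Tendsto d atTop (𝓝 0) := hd0'
  have hCc : IsClosed (⋃ q ∈ (idx n k).erase p,
      (lineOf q : Set (EuclideanSpace ℝ (Fin n)))) := closed_other (k := k) p
  have hxC := not_mem_other hk hx0 hp hx
  have hxd : Tendsto (fun m => x + d m) atTop (𝓝 x) := by
    have := tendsto_const_nhds (x := x) (f := atTop (α := ℕ)) |>.add hd0
    simpa using this
  have hev : ∀ᶠ m in atTop, x + d m ∈
      (⋃ q ∈ (idx n k).erase p, (lineOf q : Set (EuclideanSpace ℝ (Fin n))))ᶜ :=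
    hxd.eventually_mem (hCc.isOpen_compl.mem_nhds hxC)
  have hev2 : ∀ᶠ m in atTop, d m ∈ lineOf p := by
    filter_upwards [hd, hev] with m h1 h2
    have hz : x + d m ∈ lineOf p := mem_line_of_mem_Enk hk hkn hp h2 h1
    have := (lineOf p).sub_mem hz hx
    simpa using this
  have hev3 : ∀ᶠ m in atTop, c m • d m ∈ (lineOf p : Set (EuclideanSpace ℝ (Fin n))) :=
    hev2.mono (fun m hm => (lineOf p).smul_mem _ hm)
  exact (lineOf p).closed_of_finiteDimensional.mem_of_tendsto hcd hev3

lemma line_dir_mem_tangent {k : ℕ} (hk : 1 ≤ k) (hkn : k ≤ n)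
    {p : Finset (Fin n) × Finset (Fin n)} (hp : p ∈ idx n k)
    {x : EuclideanSpace ℝ (Fin n)} (hx : x ∈ lineOf p) :
    svp p ∈ tangentConeAt ℝ (Enk n k) x := by
  apply mem_tangentCone_of_ray
  intro m
  exact lineOf_subset_Enk hk hkn hp
    ((lineOf p).add_mem hx ((lineOf p).smul_mem _ (svp_mem_lineOf p)))

/-- The orthogonal projection of `y` onto the line of `p`. -/
def prj (p : Finset (Fin n) × Finset (Fin n)) (y : EuclideanSpace ℝ (Fin n)) :
    EuclideanSpace ℝ (Fin n) :=
  ((⟪y, svp p⟫ / ⟪svp p, svp p⟫ : ℝ)) • svp p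

lemma svp_ne_zero {k : ℕ} (hk : 1 ≤ k) {p : Finset (Fin n) × Finset (Fin n)}
    (hp : p ∈ idx n k) : svp p ≠ 0 :=
  sv_ne_zero (nonempty_of_mem_idx hk hp)

lemma inner_svp_self_ne_zero {k : ℕ} (hk : 1 ≤ k) {p : Finset (Fin n) × Finset (Fin n)}
    (hp : p ∈ idx n k) : (⟪svp p, svp p⟫ : ℝ) ≠ 0 :=
  inner_self_ne_zero.2 (svp_ne_zero hk hp)

lemma prj_ne_zero {k : ℕ} (hk : 1 ≤ k) {p : Finset (Fin n) × Finset (Fin n)}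
    (hp : p ∈ idx n k) {y : EuclideanSpace ℝ (Fin n)} (hy : (⟪y, svp p⟫ : ℝ) ≠ 0) :
    prj p y ≠ 0 := by
  rw [prj]
  intro h
  rcases smul_eq_zero.1 h with h' | h'
  · rcases div_eq_zero_iff.1 h' with h'' | h''
    · exact hy h''
    · exact inner_svp_self_ne_zero hk hp h''
  · exact svp_ne_zero hk hp h'

lemma prj_mem_line (p : Finset (Fin n) × Finset (Fin n)) (y : EuclideanSpace ℝ (Fin n)) :
    prj p y ∈ lineOf p :=
  (lineOf p).smul_mem _ (svp_mem_lineOf p)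

lemma idx_nonempty {k : ℕ} (hk : 1 ≤ k) (hkn : k ≤ n) : (idx n k).Nonempty := by
  rw [← Finset.card_pos, card_idx hk]
  have h1 := Nat.choose_pos hkn
  positivity

lemma crit_iff {k : ℕ} (hk : 1 ≤ k) (hkn : k ≤ n) {y : EuclideanSpace ℝ (Fin n)}
    (hy : ∀ p ∈ idx n k, (⟪y, svp p⟫ : ℝ) ≠ 0) :
    {x | EDCritPt (Enk n k) y x} = (fun p => prj p y) '' ↑(idx n k) := by
  ext x
  simp only [Set.mem_setOf_eq, Set.mem_image, Finset.mem_coe]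
  constructor
  · rintro ⟨hsm, hnorm⟩
    have hxS : x ∈ Enk n k := hsm.1
    have hx0 : x ≠ 0 := by
      rintro rfl
      obtain ⟨p, hp⟩ := idx_nonempty hk hkn
      have htan : svp p ∈ tangentConeAt ℝ (Enk n k) (0 : EuclideanSpace ℝ (Fin n)) := by
        apply mem_tangentCone_of_ray
        intro m
        apply lineOf_subset_Enk hk hkn hp
        simpa using (lineOf p).smul_mem ((m : ℝ) + 1)⁻¹ (svp_mem_lineOf p)
      have h0 := hnorm _ htan
      rw [sub_zero] at h0
      exact hy p hp h0
    rw [← union_lines hk hkn] at hxS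
    simp only [Set.mem_iUnion, SetLike.mem_coe] at hxS
    obtain ⟨p, hp, hxp⟩ := hxS
    refine ⟨p, hp, ?_⟩
    obtain ⟨c, hc⟩ := Submodule.mem_span_singleton.1 hxp
    have h1 : (⟪y - x, svp p⟫ : ℝ) = 0 := hnorm _ (line_dir_mem_tangent hk hkn hp hxp)
    have h2 : (⟪y, svp p⟫ : ℝ) = c * ⟪svp p, svp p⟫ := by
      rw [inner_sub_left, sub_eq_zero] at h1
      rw [h1, ← hc, real_inner_smul_left]
    rw [prj, h2, mul_div_assoc, div_self (inner_svp_self_ne_zero hk hp), mul_one, hc]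
  · rintro ⟨p, hp, rfl⟩
    have hxL : prj p y ∈ lineOf p := prj_mem_line p y
    have hx0 : prj p y ≠ 0 := prj_ne_zero hk hp (hy p hp)
    refine ⟨smooth_of_line hk hkn hp hxL hx0, ?_⟩
    intro w hw
    have hwL := tangent_subset hk hkn hp hxL hx0 hw
    obtain ⟨a, ha⟩ := Submodule.mem_span_singleton.1 (SetLike.mem_coe.1 hwL)
    have hyv : (⟪y - prj p y, svp p⟫ : ℝ) = 0 := by
      rw [inner_sub_left, prj, real_inner_smul_left,
        div_mul_cancel₀ _ (inner_svp_self_ne_zero hk hp), sub_self]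
    rw [← ha, real_inner_smul_right, hyv, mul_zero]

lemma prj_injOn {k : ℕ} (hk : 1 ≤ k) {y : EuclideanSpace ℝ (Fin n)}
    (hy : ∀ p ∈ idx n k, (⟪y, svp p⟫ : ℝ) ≠ 0) :
    Set.InjOn (fun p => prj p y) ↑(idx n k) := by
  intro p hp q hq h
  simp only [Finset.mem_coe] at hp hq
  have hx0 : prj p y ≠ 0 := prj_ne_zero hk hp (hy p hp)
  have h' : prj p y = prj q y := h
  have hqmem : prj p y ∈ lineOf q := by rw [h']; exact prj_mem_line q y
  exact mem_line_unique hk hx0 hp hq (prj_mem_line p y) hqmem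

lemma bad_null {k : ℕ} (hk : 1 ≤ k) :
    (MeasureTheory.volume : MeasureTheory.Measure (EuclideanSpace ℝ (Fin n)))
      {y | ¬ ∀ p ∈ idx n k, (⟪y, svp p⟫ : ℝ) ≠ 0} = 0 := by
  have hnull : (MeasureTheory.volume : MeasureTheory.Measure (EuclideanSpace ℝ (Fin n)))
      (⋃ p ∈ (↑(idx n k) : Set (Finset (Fin n) × Finset (Fin n))), ((lineOf p)ᗮ : Set (EuclideanSpace ℝ (Fin n)))) = 0 := by
    rw [measure_biUnion_null_iff (Finset.countable_toSet _)]
    intro p hp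
    apply MeasureTheory.Measure.addHaar_submodule
    intro hc
    have h1 : svp p ∈ (lineOf p)ᗮ := by rw [hc]; trivial
    have h2 := (Submodule.mem_orthogonal _ _).1 h1 (svp p) (svp_mem_lineOf p)
    simp only [Finset.mem_coe] at hp
    exact inner_svp_self_ne_zero hk hp h2
  apply measure_mono_null _ hnull
  · intro y hy
    simp only [Set.mem_setOf_eq, not_forall] at hy
    obtain ⟨p, hp, hyp⟩ := hy
    rw [not_not] at hyp
    refine Set.mem_biUnion hp ?_
    rw [SetLike.mem_coe, Submodule.mem_orthogonal]
    intro u hu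
    obtain ⟨a, rfl⟩ := Submodule.mem_span_singleton.1 hu
    rw [real_inner_smul_left, real_inner_comm, hyp, mul_zero]

end CritEnkAux



/-- `E_{n,k}` is a minimally defined union of `2^{k-1}·C(n,k)` linear
subspaces, and for almost every `y` the number of ED critical points of `y` on
`E_{n,k}` equals `2^{k-1}·C(n,k)`. -/
theorem crit_points_Enk {n k : ℕ} (hk : 1 ≤ k) (hkn : k ≤ n) :
    (∃ L : Finset (Set (EuclideanSpace ℝ (Fin n))),
      L.card = 2 ^ (k - 1) * Nat.choose n k ∧
      (∀ W ∈ L, ∃ p : Submodule ℝ (EuclideanSpace ℝ (Fin n)), W = (p : Set _)) ∧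
      (∀ W ∈ L, ∀ W' ∈ L, W ≠ W' → ¬ W ⊆ W') ∧
      (⋃ W ∈ L, W) = Enk n k) ∧
    (∀ᵐ y ∂(MeasureTheory.volume : MeasureTheory.Measure (EuclideanSpace ℝ (Fin n))),
      {x | EDCritPt (Enk n k) y x}.ncard = 2 ^ (k - 1) * Nat.choose n k) := by
  classical
  constructor
  · refine ⟨(CritEnkAux.idx n k).image
      (fun p => ((CritEnkAux.lineOf p : Submodule ℝ (EuclideanSpace ℝ (Fin n))) : Set _)),
      ?_, ?_, ?_, ?_⟩
    · rw [Finset.card_image_of_injOn, CritEnkAux.card_idx hk]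
      intro p hp q hq h
      exact CritEnkAux.line_injOn hk (Finset.mem_coe.1 hp) (Finset.mem_coe.1 hq)
        (SetLike.coe_set_eq.1 h)
    · intro W hW
      obtain ⟨p, hp, rfl⟩ := Finset.mem_image.1 hW
      exact ⟨_, rfl⟩
    · intro W hW W' hW' hne hsub
      obtain ⟨p, hp, rfl⟩ := Finset.mem_image.1 hW
      obtain ⟨q, hq, rfl⟩ := Finset.mem_image.1 hW'
      have h1 : CritEnkAux.svp p ∈ CritEnkAux.lineOf q :=
        hsub (CritEnkAux.svp_mem_lineOf p)
      obtain ⟨c, hc⟩ := Submodule.mem_span_singleton.1 h1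
      have hc0 : c ≠ 0 := by
        rintro rfl
        rw [zero_smul] at hc
        exact CritEnkAux.svp_ne_zero hk hp hc.symm
      have heq : CritEnkAux.lineOf p = CritEnkAux.lineOf q := by
        rw [CritEnkAux.lineOf, ← hc,
          Submodule.span_singleton_smul_eq (isUnit_iff_ne_zero.2 hc0)]
        rfl
      exact hne (congrArg _ heq)
    · have hbu : (⋃ W ∈ (CritEnkAux.idx n k).image
          (fun p => ((CritEnkAux.lineOf p : Submodule ℝ (EuclideanSpace ℝ (Fin n))) : Set _)), W)
          = ⋃ p ∈ CritEnkAux.idx n k,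
              (CritEnkAux.lineOf p : Set (EuclideanSpace ℝ (Fin n))) := by
        ext z
        simp only [Set.mem_iUnion, Finset.mem_image, exists_prop]
        constructor
        · rintro ⟨W, ⟨p, hp, rfl⟩, hz⟩
          exact ⟨p, hp, hz⟩
        · rintro ⟨p, hp, hz⟩
          exact ⟨_, ⟨p, hp, rfl⟩, hz⟩
      rw [hbu, CritEnkAux.union_lines hk hkn]
  · have hbad := CritEnkAux.bad_null (n := n) hk
    have hae : ∀ᵐ y ∂(MeasureTheory.volume :
        MeasureTheory.Measure (EuclideanSpace ℝ (Fin n))),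
        ∀ p ∈ CritEnkAux.idx n k, (⟪y, CritEnkAux.svp p⟫ : ℝ) ≠ 0 := by
      rw [MeasureTheory.ae_iff]
      exact hbad
    filter_upwards [hae] with y hy
    rw [CritEnkAux.crit_iff hk hkn hy,
      Set.ncard_image_of_injOn (CritEnkAux.prj_injOn hk hy),
      Set.ncard_coe_finset, CritEnkAux.card_idx hk]
end
end

section
/- A set M ⊆ ℝ^{n×t} (n ≤ t) is orthogonally invariant (M = U M Vᵀ for all orthogonal U ∈ O(n), V ∈ O(t)) if and only if there exists an absolutely symmetric set S ⊆ ℝⁿ (invariant under all signed permutations of coordinates) with M = σ⁻¹(S), where σ(X) is the vector of singular values of X in non-increasing order. -/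
open scoped RealInnerProductSpace
open Matrix
open MeasureTheory

noncomputable section

/-! ### Auxiliary lemmas -/

section Aux

open Polynomial in
lemma aux_charpoly_orth_conj {m : ℕ} (U A : Matrix (Fin m) (Fin m) ℝ) (hU : U * Uᵀ = 1) :
    (U * A * Uᵀ).charpoly = A.charpoly := by
  have hcomm : ∀ W : Matrix (Fin m) (Fin m) ℝ[X],
      W * Matrix.scalar (Fin m) (X : ℝ[X]) = Matrix.scalar (Fin m) (X : ℝ[X]) * W := by
    intro W
    ext i j
    simp [Matrix.scalar_apply, Matrix.mul_diagonal, Matrix.diagonal_mul, mul_comm]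
  have hmap : (U.map C) * (Uᵀ.map C) = 1 := by
    rw [← Matrix.map_mul, hU]; simp
  have key : Matrix.charmatrix (U * A * Uᵀ) = (U.map C) * Matrix.charmatrix A * (Uᵀ.map C) := by
    unfold Matrix.charmatrix
    simp only [RingHom.mapMatrix_apply]
    rw [Matrix.map_mul, Matrix.map_mul, mul_sub, sub_mul]
    congr 1
    rw [hcomm (U.map C), mul_assoc, hmap, mul_one]
  have hmap' : (Uᵀ.map C) * (U.map C) = 1 := by
    rw [← Matrix.map_mul, mul_eq_one_comm.mp hU]; simp
  rw [Matrix.charpoly, Matrix.charpoly, key, Matrix.det_mul, Matrix.det_mul, mul_comm,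
    ← mul_assoc, ← Matrix.det_mul, hmap']
  simp

open Polynomial in
lemma aux_charpoly_diag {m : ℕ} (d : Fin m → ℝ) :
    (Matrix.diagonal d).charpoly = ∏ i, (X - C (d i)) := by
  have : Matrix.charmatrix (Matrix.diagonal d) = Matrix.diagonal (fun i => X - C (d i)) := by
    ext i j
    rcases eq_or_ne i j with rfl | h
    · simp
    · simp [h, Matrix.diagonal_apply_ne _ h]
  rw [Matrix.charpoly, this, Matrix.det_diagonal]

lemma aux_star_real_mat {a b : ℕ} (A : Matrix (Fin a) (Fin b) ℝ) : Aᴴ = Aᵀ :=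
  Matrix.conjTranspose_eq_transpose_of_trivial A

open Polynomial in
lemma aux_charpoly_hermitian {m : ℕ} (A : Matrix (Fin m) (Fin m) ℝ) (hA : A.IsHermitian) :
    A.charpoly = ∏ i, (X - C (hA.eigenvalues i)) := by
  set W : Matrix (Fin m) (Fin m) ℝ := (hA.eigenvectorUnitary : Matrix (Fin m) (Fin m) ℝ)
    with hWdef
  have hW : W * Wᵀ = 1 := by
    have := Matrix.mem_unitaryGroup_iff.mp hA.eigenvectorUnitary.2
    simpa [Matrix.star_eq_conjTranspose, aux_star_real_mat] using this
  have hAeq : A = W * Matrix.diagonal hA.eigenvalues * Wᵀ := by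
    conv_lhs => rw [hA.spectral_theorem]
    simp [Matrix.star_eq_conjTranspose, aux_star_real_mat, Function.comp_def]
    rfl
  conv_lhs => rw [hAeq]
  rw [aux_charpoly_orth_conj _ _ hW, aux_charpoly_diag]

open Polynomial in
lemma aux_eig_multiset_conj {m : ℕ} (A U : Matrix (Fin m) (Fin m) ℝ) (hU : U * Uᵀ = 1)
    (hA : A.IsHermitian) (hB : (U * A * Uᵀ).IsHermitian) :
    Multiset.map hB.eigenvalues Finset.univ.val = Multiset.map hA.eigenvalues Finset.univ.val := by
  have h1 := aux_charpoly_hermitian A hA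
  have h2 := aux_charpoly_hermitian _ hB
  have h3 := aux_charpoly_orth_conj U A hU
  have key : ((Multiset.map hB.eigenvalues Finset.univ.val).map fun a => X - C a).prod
      = ((Multiset.map hA.eigenvalues Finset.univ.val).map fun a => X - C a).prod := by
    rw [Multiset.map_map, Multiset.map_map, Finset.prod_map_val, Finset.prod_map_val]
    simpa [Function.comp_def] using h2.symm.trans (h3.trans h1)
  have := congrArg Polynomial.roots key
  rwa [Polynomial.roots_multiset_prod_X_sub_C, Polynomial.roots_multiset_prod_X_sub_C] at this

lemma aux_comp_sort_eq_of_multiset_eq {m : ℕ} {f g : Fin m → ℝ}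
    (h : Multiset.map f Finset.univ.val = Multiset.map g Finset.univ.val) :
    f ∘ Tuple.sort f = g ∘ Tuple.sort g := by
  have hfg : (List.ofFn f).Perm (List.ofFn g) := by
    rw [← Multiset.coe_eq_coe]
    simpa [Fin.univ_val_map] using h
  have hp : (List.ofFn (f ∘ Tuple.sort f)).Perm (List.ofFn (g ∘ Tuple.sort g)) :=
    (((Tuple.sort f).ofFn_comp_perm f).trans hfg).trans ((Tuple.sort g).ofFn_comp_perm g).symm
  exact List.ofFn_injective (List.Perm.eq_of_sortedLE
    (Tuple.monotone_sort f).sortedLE_ofFn (Tuple.monotone_sort g).sortedLE_ofFn hp)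

lemma aux_eig_congr {m : ℕ} {A B : Matrix (Fin m) (Fin m) ℝ} (h : A = B)
    (hA : A.IsHermitian) (hB : B.IsHermitian) : hA.eigenvalues = hB.eigenvalues := by
  subst h; rfl

lemma singvals_def' {n t : ℕ} (X : Matrix (Fin n) (Fin t) ℝ) :
    singvals X = fun i =>
      Real.sqrt ((Matrix.isHermitian_mul_conjTranspose_self X).eigenvalues
        (Tuple.sort (fun j => -Real.sqrt
          ((Matrix.isHermitian_mul_conjTranspose_self X).eigenvalues j)) i)) := by
  simp only [singvals]

lemma aux_singvals_conj {n t : ℕ} (U : Matrix (Fin n) (Fin n) ℝ) (V : Matrix (Fin t) (Fin t) ℝ)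
    (X : Matrix (Fin n) (Fin t) ℝ) (hU : U * Uᵀ = 1) (hV : V * Vᵀ = 1) :
    singvals (U * X * Vᵀ) = singvals X := by
  have hV' : Vᵀ * V = 1 := mul_eq_one_comm.mp hV
  have hBeq : (U * X * Vᵀ) * (U * X * Vᵀ)ᴴ = U * (X * Xᴴ) * Uᵀ := by
    rw [aux_star_real_mat, aux_star_real_mat]
    simp only [Matrix.transpose_mul, Matrix.transpose_transpose, Matrix.mul_assoc]
    rw [← Matrix.mul_assoc Vᵀ V, hV', Matrix.one_mul]
  have hB' : (U * (X * Xᴴ) * Uᵀ).IsHermitian :=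
    hBeq ▸ Matrix.isHermitian_mul_conjTranspose_self (U * X * Vᵀ)
  have e1 : (Matrix.isHermitian_mul_conjTranspose_self (U * X * Vᵀ)).eigenvalues
      = hB'.eigenvalues := aux_eig_congr hBeq _ _
  have e2 := aux_eig_multiset_conj (X * Xᴴ) U hU
    (Matrix.isHermitian_mul_conjTranspose_self X) hB'
  set gB : Fin n → ℝ := fun j =>
    Real.sqrt ((Matrix.isHermitian_mul_conjTranspose_self (U * X * Vᵀ)).eigenvalues j) with hgB
  set gA : Fin n → ℝ := fun j =>
    Real.sqrt ((Matrix.isHermitian_mul_conjTranspose_self X).eigenvalues j) with hgA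
  have hms : Multiset.map (fun j => -gB j) Finset.univ.val
      = Multiset.map (fun j => -gA j) Finset.univ.val := by
    have aux : ∀ (h : Fin n → ℝ),
        Multiset.map (fun j => -Real.sqrt (h j)) Finset.univ.val
          = Multiset.map (fun r => -Real.sqrt r) (Multiset.map h Finset.univ.val) := by
      intro h; rw [Multiset.map_map]; rfl
    rw [hgB, hgA, aux, aux, e1, e2]
  have main := aux_comp_sort_eq_of_multiset_eq hms
  ext i
  have hmi := congrFun main i
  simp only [Function.comp_apply, neg_inj] at hmi
  rw [singvals_def', singvals_def']
  exact hmi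

lemma aux_dot_eq_inner {m : ℕ} (x y : EuclideanSpace ℝ (Fin m)) :
    (x : Fin m → ℝ) ⬝ᵥ (y : Fin m → ℝ) = ⟪x, y⟫ := by
  simp [dotProduct, PiLp.inner_apply, mul_comm]

lemma aux_exists_svd {n t : ℕ} (hnt : n ≤ t) (X : Matrix (Fin n) (Fin t) ℝ) :
    ∃ (U : Matrix (Fin n) (Fin n) ℝ) (V : Matrix (Fin t) (Fin t) ℝ),
      U * Uᵀ = 1 ∧ V * Vᵀ = 1 ∧ X = U * diagRect (singvals X) * Vᵀ := by
  classical
  set hH := Matrix.isHermitian_mul_conjTranspose_self X with hHdef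
  set g : Fin n → ℝ := fun j => Real.sqrt (hH.eigenvalues j) with hg
  set s : Equiv.Perm (Fin n) := Tuple.sort (fun j => -g j) with hs
  set σ : Fin n → ℝ := (singvals X : Fin n → ℝ) with hσ
  have hσeq : ∀ i, σ i = g (s i) := fun i => rfl
  have hσnn : ∀ i, 0 ≤ σ i := fun i => Real.sqrt_nonneg _
  have heig : ∀ i, hH.eigenvalues (s i) = σ i ^ 2 := by
    intro i
    rw [hσeq, hg]
    rw [Real.sq_sqrt (Matrix.eigenvalues_self_mul_conjTranspose_nonneg X (s i))]
  set u : Fin n → EuclideanSpace ℝ (Fin n) := fun i => hH.eigenvectorBasis (s i) with hu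
  have huo : ∀ i k, (u i : Fin n → ℝ) ⬝ᵥ (u k : Fin n → ℝ) = if i = k then 1 else 0 := by
    intro i k
    rw [aux_dot_eq_inner]
    exact orthonormal_iff_ite.mp (hH.eigenvectorBasis.orthonormal.comp s s.injective) i k
  have hmv : ∀ i, (X * Xᵀ) *ᵥ (u i : Fin n → ℝ) = hH.eigenvalues (s i) • (u i : Fin n → ℝ) := by
    intro i
    rw [← aux_star_real_mat]
    exact hH.mulVec_eigenvectorBasis (s i)
  set w : Fin n → (Fin t → ℝ) := fun i => Xᵀ *ᵥ (u i : Fin n → ℝ) with hw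
  have hww : ∀ i k, w i ⬝ᵥ w k = if i = k then σ k ^ 2 else 0 := by
    intro i k
    simp only [hw]
    rw [Matrix.mulVec_transpose, ← Matrix.dotProduct_mulVec, Matrix.mulVec_mulVec, hmv k,
      dotProduct_smul, huo, heig]
    simp [smul_eq_mul, mul_ite]
  have hwzero : ∀ i, σ i = 0 → w i = 0 := by
    intro i h0
    have h1 := hww i i
    rw [if_pos rfl, h0] at h1
    simp only [ne_eq, OfNat.ofNat_ne_zero, not_false_eq_true, zero_pow] at h1
    exact dotProduct_self_eq_zero.mp h1
  set sset : Set (Fin t) := {j | ∃ h : (j : ℕ) < n, σ ⟨j, h⟩ ≠ 0} with hsset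
  set v : Fin t → EuclideanSpace ℝ (Fin t) :=
    fun j => if h : (j : ℕ) < n then (σ ⟨j, h⟩)⁻¹ • (WithLp.toLp 2 (w ⟨j, h⟩) : EuclideanSpace ℝ (Fin t)) else 0
    with hv
  have hvon : Orthonormal ℝ (sset.restrict v) := by
    rw [orthonormal_iff_ite]
    rintro ⟨j, hj1, hj2⟩ ⟨k, hk1, hk2⟩
    rw [← aux_dot_eq_inner]
    simp only [Set.restrict_apply, Set.restrict, hv]
    rw [dif_pos hj1, dif_pos hk1]
    simp only [WithLp.ofLp_smul, WithLp.ofLp_toLp]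
    rw [smul_dotProduct, dotProduct_smul, hww]
    by_cases hjk : (⟨(j : ℕ), hj1⟩ : Fin n) = ⟨(k : ℕ), hk1⟩
    · have hj_eq_k : j = k := Fin.val_injective (congrArg (fun z : Fin n => (z : ℕ)) hjk)
      subst hj_eq_k
      rw [if_pos rfl]
      simp only [Subtype.mk.injEq, if_pos rfl, if_true, smul_eq_mul]
      field_simp
    · have hne : j ≠ k := by
        intro hc; exact hjk (by subst hc; rfl)
      rw [if_neg hjk]
      simp [Subtype.mk.injEq, hne]
  have hcard : Module.finrank ℝ (EuclideanSpace ℝ (Fin t)) = Fintype.card (Fin t) := by simp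
  obtain ⟨b, hb⟩ := hvon.exists_orthonormalBasis_extension_of_card_eq hcard
  have hbon : ∀ j k, (b j : Fin t → ℝ) ⬝ᵥ (b k : Fin t → ℝ) = if j = k then 1 else 0 := by
    intro j k
    rw [aux_dot_eq_inner]
    exact orthonormal_iff_ite.mp b.orthonormal j k
  have hwb : ∀ i j, w i ⬝ᵥ (b j : Fin t → ℝ) = if (j : ℕ) = (i : ℕ) then σ i else 0 := by
    intro i j
    by_cases h0 : σ i = 0
    · rw [hwzero i h0]
      simp [h0]
    · have hlt : ((Fin.castLE hnt i : Fin t) : ℕ) < n := by simpa using i.isLt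
      have hfix0 : (⟨((Fin.castLE hnt i : Fin t) : ℕ), hlt⟩ : Fin n) = i := Fin.ext (by simp)
      have hmem : (Fin.castLE hnt i) ∈ sset := by
        refine ⟨hlt, ?_⟩
        rw [hfix0]
        exact h0
      have hwi : w i = σ i • ((v (Fin.castLE hnt i)) : Fin t → ℝ) := by
        rw [hv]
        simp only []
        rw [dif_pos hlt, hfix0, WithLp.ofLp_smul, WithLp.ofLp_toLp, smul_smul, mul_inv_cancel₀ h0, one_smul]
      rw [hwi, smul_dotProduct]
      have hvb : ((v (Fin.castLE hnt i)) : Fin t → ℝ) = (b (Fin.castLE hnt i) : Fin t → ℝ) := by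
        rw [hb _ hmem]
      rw [hvb, hbon]
      by_cases hji : (j : ℕ) = (i : ℕ)
      · have hcj : Fin.castLE hnt i = j := by apply Fin.ext; simp [hji]
        simp [hcj, hji]
      · have hcj : Fin.castLE hnt i ≠ j := by
          intro hc
          have := congrArg (fun z : Fin t => (z : ℕ)) hc
          simp only [Fin.coe_castLE] at this
          exact hji this.symm
        simp [hcj, hji]
  set Umat : Matrix (Fin n) (Fin n) ℝ := fun a i => (u i : Fin n → ℝ) a with hUm
  set Vmat : Matrix (Fin t) (Fin t) ℝ := fun a j => (b j : Fin t → ℝ) a with hVm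
  have hUo : Umatᵀ * Umat = 1 := by
    ext i k
    simp only [Matrix.mul_apply, Matrix.transpose_apply, Matrix.one_apply]
    simp only [hUm]
    have := huo i k
    simpa [dotProduct] using this
  have hU : Umat * Umatᵀ = 1 := mul_eq_one_comm.mp hUo
  have hVo : Vmatᵀ * Vmat = 1 := by
    ext j k
    simp only [Matrix.mul_apply, Matrix.transpose_apply, Matrix.one_apply]
    simp only [hVm]
    have := hbon j k
    simpa [dotProduct] using this
  have hV : Vmat * Vmatᵀ = 1 := mul_eq_one_comm.mp hVo
  have hdiag : Umatᵀ * X * Vmat = diagRect σ := by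
    ext i j
    rw [Matrix.mul_apply]
    have hcol : ∀ l, (Umatᵀ * X) i l = w i l := by
      intro l
      rw [Matrix.mul_apply]
      simp only [Matrix.transpose_apply]
      simp only [hUm, hw, Matrix.mulVec, dotProduct, Matrix.transpose_apply]
      exact Finset.sum_congr rfl fun a _ => by rw [mul_comm]
    simp_rw [hcol]
    exact hwb i j
  refine ⟨Umat, Vmat, hU, hV, ?_⟩
  rw [← hdiag]
  calc X = (Umat * Umatᵀ) * X * (Vmat * Vmatᵀ) := by
        rw [hU, hV, Matrix.one_mul, Matrix.mul_one]
    _ = Umat * (Umatᵀ * X * Vmat) * Vmatᵀ := by simp only [Matrix.mul_assoc]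

lemma aux_diagRect_signperm {n t : ℕ} (hnt : n ≤ t) (π : Equiv.Perm (Fin n)) (ε : Fin n → ℝ)
    (hε : ∀ i, ε i = 1 ∨ ε i = -1) (x : Fin n → ℝ) :
    ∃ (U : Matrix (Fin n) (Fin n) ℝ) (V : Matrix (Fin t) (Fin t) ℝ),
      U * Uᵀ = 1 ∧ V * Vᵀ = 1 ∧
      (diagRect (fun i => ε i * x (π i)) : Matrix (Fin n) (Fin t) ℝ) = U * diagRect x * Vᵀ := by
  classical
  have hsq : ∀ i, ε i * ε i = 1 := by
    intro i; rcases hε i with h | h <;> rw [h] <;> norm_num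
  set e : Fin n ≃ {j : Fin t // (j : ℕ) < n} :=
    { toFun := fun i => ⟨Fin.castLE hnt i, by simp⟩
      invFun := fun j => ⟨(j : ℕ), j.2⟩
      left_inv := fun i => Fin.ext (by simp)
      right_inv := fun j => Subtype.ext (Fin.ext (by simp)) } with he
  set ρ : Equiv.Perm (Fin t) := π.extendDomain e with hρ
  have hρ1 : ∀ i : Fin n, ρ (Fin.castLE hnt i) = Fin.castLE hnt (π i) := by
    intro i
    have := Equiv.Perm.extendDomain_apply_image (e := π) (f := e) i
    simpa [he] using this
  have hρ2 : ∀ j : Fin t, ¬ ((j : ℕ) < n) → ρ j = j := by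
    intro j hj
    exact Equiv.Perm.extendDomain_apply_not_subtype _ _ hj
  set U : Matrix (Fin n) (Fin n) ℝ := fun i k => if k = π i then ε i else 0 with hU
  set V : Matrix (Fin t) (Fin t) ℝ := fun j l => if l = ρ j then 1 else 0 with hV
  have hUo : U * Uᵀ = 1 := by
    ext i i'
    simp only [Matrix.mul_apply, Matrix.transpose_apply, Matrix.one_apply]
    simp only [hU,
      ite_mul, mul_ite, zero_mul, mul_zero, if_true, one_mul]
    rw [Finset.sum_ite_eq' Finset.univ (π i')]
    simp only [Finset.mem_univ, if_true]
    by_cases h : i = i'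
    · subst h; simp [hsq i]
    · have : ¬ (π i' = π i) := fun hc => h (π.injective hc.symm)
      simp [h, this]
  have hVo : V * Vᵀ = 1 := by
    ext j j'
    simp only [Matrix.mul_apply, Matrix.transpose_apply, Matrix.one_apply]
    simp only [hV,
      ite_mul, mul_ite, zero_mul, mul_zero, one_mul]
    rw [Finset.sum_ite_eq' Finset.univ (ρ j')]
    simp only [Finset.mem_univ, if_true]
    by_cases h : j = j'
    · subst h; simp
    · have : ¬ (ρ j' = ρ j) := fun hc => h (ρ.injective hc.symm)
      simp [h, this]
  refine ⟨U, V, hUo, hVo, ?_⟩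
  ext i j
  have h1 : ∀ l, (U * (diagRect x : Matrix (Fin n) (Fin t) ℝ)) i l
      = ε i * diagRect x (π i) l := by
    intro l
    simp only [Matrix.mul_apply]
    simp only [hU, ite_mul, zero_mul]
    rw [Finset.sum_ite_eq' Finset.univ (π i)]
    simp
  show _ = ∑ l, (U * diagRect x) i l * Vᵀ l j
  simp_rw [h1, Matrix.transpose_apply, hV]
  rw [Finset.sum_congr rfl (fun l _ => by rw [mul_ite, mul_one, mul_zero]),
    Finset.sum_ite_eq' Finset.univ (ρ j)]
  simp only [Finset.mem_univ, if_true]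
  by_cases hj : (j : ℕ) < n
  · have hjc : j = Fin.castLE hnt ⟨(j : ℕ), hj⟩ := Fin.ext (by simp)
    rw [hjc, hρ1]
    simp only [diagRect, Fin.coe_castLE]
    by_cases hji : (j : ℕ) = (i : ℕ)
    · have : (⟨(j : ℕ), hj⟩ : Fin n) = i := Fin.ext hji
      rw [this]
      simp [hji]
    · have hne : (⟨(j : ℕ), hj⟩ : Fin n) ≠ i := fun hc => hji (congrArg Fin.val hc)
      have : (π ⟨(j : ℕ), hj⟩ : ℕ) ≠ (π i : ℕ) :=
        fun hc => hne (π.injective (Fin.val_injective hc))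
      simp [Fin.coe_castLE, hji, this]
  · rw [hρ2 j hj]
    have h2 : ¬ ((j : ℕ) = (π i : ℕ)) := by
      intro hc; exact hj (hc ▸ (π i).isLt)
    have h3 : ¬ ((j : ℕ) = (i : ℕ)) := by
      intro hc; exact hj (hc ▸ i.isLt)
    simp [diagRect, h2, h3]

lemma aux_sandwich_cancel {n t : ℕ} (U : Matrix (Fin n) (Fin n) ℝ)
    (V : Matrix (Fin t) (Fin t) ℝ) (Y : Matrix (Fin n) (Fin t) ℝ)
    (hU : U * Uᵀ = 1) (hV : V * Vᵀ = 1) : Uᵀ * (U * Y * Vᵀ) * V = Y := by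
  have hUo : Uᵀ * U = 1 := mul_eq_one_comm.mp hU
  have hVo : Vᵀ * V = 1 := mul_eq_one_comm.mp hV
  calc Uᵀ * (U * Y * Vᵀ) * V = (Uᵀ * U) * Y * (Vᵀ * V) := by simp only [Matrix.mul_assoc]
    _ = Y := by rw [hUo, hVo, Matrix.one_mul, Matrix.mul_one]

lemma OrthInv.mem_iff' {n t : ℕ} {M : Set (Matrix (Fin n) (Fin t) ℝ)} (hM : OrthInv M)
    {U : Matrix (Fin n) (Fin n) ℝ} {V : Matrix (Fin t) (Fin t) ℝ}
    (hU : U * Uᵀ = 1) (hV : V * Vᵀ = 1) (X : Matrix (Fin n) (Fin t) ℝ) :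
    X ∈ M ↔ U * X * Vᵀ ∈ M := by
  constructor
  · intro hX
    rw [← hM U V hU hV]
    exact ⟨X, hX, rfl⟩
  · intro hX
    rw [← hM U V hU hV] at hX
    obtain ⟨Y, hY, hXY⟩ := hX
    have hYX : Y = X := by
      have h1 := congrArg (fun Z => Uᵀ * Z * V) hXY
      simp only at h1
      rw [aux_sandwich_cancel U V Y hU hV, aux_sandwich_cancel U V X hU hV] at h1
      exact h1
    rwa [← hYX]

end Aux

/-- a set of matrices is orthogonally invariant iff it is `σ⁻¹(S)` for an
absolutely symmetric set `S ⊆ ℝⁿ`. -/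
theorem orthInv_iff_exists_absSymm {n t : ℕ} (hnt : n ≤ t)
    (M : Set (Matrix (Fin n) (Fin t) ℝ)) :
    OrthInv M ↔ ∃ S : Set (EuclideanSpace ℝ (Fin n)),
      AbsSymm S ∧ M = {X | singvals X ∈ S} := by
  constructor
  · intro hM
    refine ⟨{x : EuclideanSpace ℝ (Fin n) | (diagRect x : Matrix (Fin n) (Fin t) ℝ) ∈ M},
      ?_, ?_⟩
    · intro π ε hε x
      simp only [Set.mem_setOf_eq]
      obtain ⟨U, V, hU, hV, heq⟩ := aux_diagRect_signperm hnt π ε hε x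
      show (diagRect x : Matrix (Fin n) (Fin t) ℝ) ∈ M ↔
        (diagRect (fun i => ε i * x (π i)) : Matrix (Fin n) (Fin t) ℝ) ∈ M
      rw [heq]
      exact hM.mem_iff' hU hV _
    · ext X
      simp only [Set.mem_setOf_eq]
      obtain ⟨U, V, hU, hV, hXeq⟩ := aux_exists_svd hnt X
      constructor
      · intro hX
        exact (hM.mem_iff' hU hV _).mpr (hXeq ▸ hX)
      · intro hS
        rw [hXeq]
        exact (hM.mem_iff' hU hV _).mp hS
  · rintro ⟨S, hS, rfl⟩
    intro U V hU hV
    have hU' : Uᵀ * (Uᵀ)ᵀ = 1 := by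
      rw [Matrix.transpose_transpose]
      exact mul_eq_one_comm.mp hU
    have hV' : Vᵀ * (Vᵀ)ᵀ = 1 := by
      rw [Matrix.transpose_transpose]
      exact mul_eq_one_comm.mp hV
    ext Z
    constructor
    · rintro ⟨X, hX, rfl⟩
      simp only [Set.mem_setOf_eq] at hX ⊢
      rwa [aux_singvals_conj U V X hU hV]
    · intro hZ
      refine ⟨Uᵀ * Z * V, ?_, ?_⟩
      · simp only [Set.mem_setOf_eq] at hZ ⊢
        have h1 : singvals (Uᵀ * Z * (Vᵀ)ᵀ) = singvals Z :=
          aux_singvals_conj Uᵀ Vᵀ Z hU' hV'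
        rw [Matrix.transpose_transpose] at h1
        rwa [h1]
      · have h2 := aux_sandwich_cancel Uᵀ Vᵀ Z hU' hV'
        rw [Matrix.transpose_transpose, Matrix.transpose_transpose] at h2
        exact h2
end
end

section
/- If S ⊆ ℝⁿ is absolutely symmetric, then for every Y ∈ ℝ^{n×t}, dist(Y, σ⁻¹(S)) in Frobenius norm equals dist(σ(Y), S) in Euclidean norm. -/
open scoped RealInnerProductSpace
open Matrix
open MeasureTheory

noncomputable section

section AuxLemmas
open Finset

lemma ct_eq {n t : ℕ} (X : Matrix (Fin n) (Fin t) ℝ) : Xᴴ = Xᵀ := by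
  ext i j; simp [conjTranspose_apply]

lemma toEuc_sub {n t : ℕ} (A B : Matrix (Fin n) (Fin t) ℝ) :
    toEuc A - toEuc B = toEuc (A - B) := by ext; simp [toEuc]

lemma norm_toEuc_sq {n t : ℕ} (A : Matrix (Fin n) (Fin t) ℝ) :
    ‖toEuc A‖ ^ 2 = ∑ i, ∑ j, (A i j) ^ 2 := by
  rw [EuclideanSpace.norm_eq]
  rw [Real.sq_sqrt (by positivity), ← Finset.sum_product']
  exact Finset.sum_congr rfl (fun p _ => by simp [toEuc, sq_abs])

lemma norm_toEuc_sq_eq_trace {n t : ℕ} (A : Matrix (Fin n) (Fin t) ℝ) :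
    ‖toEuc A‖ ^ 2 = trace (A * Aᵀ) := by
  rw [norm_toEuc_sq, trace]
  simp only [diag_apply, mul_apply, transpose_apply, sq]

lemma frob_orth_inv {n t : ℕ} (U : Matrix (Fin n) (Fin n) ℝ) (V : Matrix (Fin t) (Fin t) ℝ)
    (hU : U * Uᵀ = 1) (hV : V * Vᵀ = 1) (A : Matrix (Fin n) (Fin t) ℝ) :
    ‖toEuc (U * A * Vᵀ)‖ = ‖toEuc A‖ := by
  have hU' : Uᵀ * U = 1 := mul_eq_one_comm.mp hU
  have hV' : Vᵀ * V = 1 := mul_eq_one_comm.mp hV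
  have h : ‖toEuc (U * A * Vᵀ)‖ ^ 2 = ‖toEuc A‖ ^ 2 := by
    rw [norm_toEuc_sq_eq_trace, norm_toEuc_sq_eq_trace]
    rw [transpose_mul, transpose_mul, transpose_transpose]
    have : U * A * Vᵀ * (V * (Aᵀ * Uᵀ)) = U * (A * Aᵀ) * Uᵀ := by
      calc U * A * Vᵀ * (V * (Aᵀ * Uᵀ)) = U * A * (Vᵀ * V) * (Aᵀ * Uᵀ) := by
            simp only [Matrix.mul_assoc]
        _ = U * (A * Aᵀ) * Uᵀ := by rw [hV']; simp only [Matrix.mul_one, Matrix.mul_assoc]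
    rw [this, trace_mul_cycle, ← Matrix.mul_assoc, hU', Matrix.one_mul]
  have := sq_abs ‖toEuc A‖
  nlinarith [norm_nonneg (toEuc (U * A * Vᵀ)), norm_nonneg (toEuc A)]

lemma antitone_unique {n : ℕ} {f g : Fin n → ℝ} (hf : Antitone f) (hg : Antitone g)
    (h : Multiset.map f Finset.univ.val = Multiset.map g Finset.univ.val) : f = g := by
  have hperm : (List.ofFn f).Perm (List.ofFn g) := by
    rw [← Multiset.coe_eq_coe]
    simpa [← Fin.univ_val_map] using h
  have hsf : (List.ofFn f).Pairwise (· ≥ ·) := by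
    rw [List.pairwise_ofFn]; intro i j hij; exact hf hij.le
  have hsg : (List.ofFn g).Pairwise (· ≥ ·) := by
    rw [List.pairwise_ofFn]; intro i j hij; exact hg hij.le
  have := List.Perm.eq_of_pairwise' hsf hsg hperm
  exact List.ofFn_injective this

lemma det_smul_one_sub_conj {n : ℕ} (U : Matrix (Fin n) (Fin n) ℝ) (c : Fin n → ℝ)
    (hU : U * Uᵀ = 1) (x : ℝ) :
    det (x • (1 : Matrix (Fin n) (Fin n) ℝ) - U * diagonal c * Uᵀ) = ∏ i, (x - c i) := by
  have h1 : x • (1 : Matrix (Fin n) (Fin n) ℝ) - U * diagonal c * Uᵀ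
      = U * (diagonal (fun i => x - c i)) * Uᵀ := by
    have hx : x • (1 : Matrix (Fin n) (Fin n) ℝ) = U * (x • (1:Matrix (Fin n) (Fin n) ℝ)) * Uᵀ := by
      rw [Matrix.mul_smul, Matrix.mul_one, Matrix.smul_mul, hU]
    rw [hx]
    have : diagonal (fun i => x - c i) = x • (1 : Matrix (Fin n) (Fin n) ℝ) - diagonal c := by
      ext i j
      by_cases hij : i = j <;> simp [diagonal, one_apply, hij]
    rw [this, Matrix.mul_sub, Matrix.sub_mul]
  have hdet : det U * det Uᵀ = 1 := by
    have := congrArg det hU; rwa [det_mul, det_one] at this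
  rw [h1, det_mul, det_mul]
  calc det U * det (diagonal fun i => x - c i) * det Uᵀ
      = (det U * det Uᵀ) * det (diagonal fun i => x - c i) := by ring
    _ = ∏ i, (x - c i) := by rw [hdet, one_mul, det_diagonal]

lemma eig_multiset {n : ℕ} {A : Matrix (Fin n) (Fin n) ℝ} (hA : A.IsHermitian)
    (U : Matrix (Fin n) (Fin n) ℝ) (d : Fin n → ℝ) (hU : U * Uᵀ = 1)
    (hAd : A = U * diagonal d * Uᵀ) :
    Multiset.map hA.eigenvalues Finset.univ.val = Multiset.map d Finset.univ.val := by
  set W : Matrix (Fin n) (Fin n) ℝ := (hA.eigenvectorUnitary : Matrix (Fin n) (Fin n) ℝ) with hW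
  have hWo : W * Wᵀ = 1 := by
    have := (Matrix.mem_unitaryGroup_iff'.mp hA.eigenvectorUnitary.2)
    -- star W * W = 1  or  W * star W = 1
    have h2 : W * star W = 1 := Matrix.mem_unitaryGroup_iff.mp hA.eigenvectorUnitary.2
    simpa [Matrix.star_eq_conjTranspose] using h2
  have hspec : A = W * diagonal hA.eigenvalues * Wᵀ := by
    have := hA.spectral_theorem
    simpa [Matrix.star_eq_conjTranspose, Function.comp] using this
  -- polynomials
  set p : Polynomial ℝ := ∏ i, (Polynomial.X - Polynomial.C (hA.eigenvalues i)) with hp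
  set q : Polynomial ℝ := ∏ i, (Polynomial.X - Polynomial.C (d i)) with hq
  have hpq : p = q := by
    apply Polynomial.funext
    intro x
    have h1 : p.eval x = ∏ i, (x - hA.eigenvalues i) := by simp [hp, Polynomial.eval_prod]
    have h2 : q.eval x = ∏ i, (x - d i) := by simp [hq, Polynomial.eval_prod]
    rw [h1, h2, ← det_smul_one_sub_conj W hA.eigenvalues hWo x,
      ← det_smul_one_sub_conj U d hU x, ← hspec, ← hAd]
  have hr1 : p.roots = Multiset.map hA.eigenvalues Finset.univ.val := by
    rw [hp, ← Polynomial.roots_multiset_prod_X_sub_C (Multiset.map hA.eigenvalues Finset.univ.val)]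
    congr 1
    rw [Multiset.map_map]
    rfl
  have hr2 : q.roots = Multiset.map d Finset.univ.val := by
    rw [hq, ← Polynomial.roots_multiset_prod_X_sub_C (Multiset.map d Finset.univ.val)]
    congr 1
    rw [Multiset.map_map]
    rfl
  rw [← hr1, ← hr2, hpq]

lemma singvals_antitone {n t : ℕ} (X : Matrix (Fin n) (Fin t) ℝ) : Antitone (singvals X) := by
  intro i j hij
  have := Tuple.monotone_sort (fun j : Fin n =>
    -Real.sqrt ((Matrix.isHermitian_mul_conjTranspose_self X).eigenvalues j)) hij
  simp only [Function.comp_apply] at this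
  simpa [singvals] using this

lemma singvals_nonneg {n t : ℕ} (X : Matrix (Fin n) (Fin t) ℝ) (i : Fin n) :
    0 ≤ singvals X i := by unfold singvals; exact Real.sqrt_nonneg _

lemma singvals_multiset {n t : ℕ} (X : Matrix (Fin n) (Fin t) ℝ) :
    Multiset.map (singvals X) Finset.univ.val
      = Multiset.map (fun j => Real.sqrt
          ((Matrix.isHermitian_mul_conjTranspose_self X).eigenvalues j)) Finset.univ.val := by
  set g : Fin n → ℝ := fun j =>
    Real.sqrt ((Matrix.isHermitian_mul_conjTranspose_self X).eigenvalues j) with hg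
  set π := Tuple.sort (fun j => -g j) with hπ
  have h1 : Multiset.map (singvals X) Finset.univ.val
      = Multiset.map g (Multiset.map π Finset.univ.val) := by
    rw [Multiset.map_map]; rfl
  have h2 : Multiset.map (⇑π) Finset.univ.val = Finset.univ.val := by
    have := Finset.map_univ_equiv π
    calc Multiset.map (⇑π) Finset.univ.val = (Finset.univ.map π.toEmbedding).val := rfl
      _ = Finset.univ.val := by rw [this]
  rw [h1, h2]

lemma sum_singvals_sq {n t : ℕ} (X : Matrix (Fin n) (Fin t) ℝ) :
    ∑ i, (singvals X i) ^ 2 = ‖toEuc X‖ ^ 2 := by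
  set hH := Matrix.isHermitian_mul_conjTranspose_self X with hhH
  set g : Fin n → ℝ := fun j => Real.sqrt (hH.eigenvalues j) with hg
  set π := Tuple.sort (fun j => -g j) with hπ
  have h1 : ∑ i, (singvals X i) ^ 2 = ∑ i, (g (π i)) ^ 2 := rfl
  have h2 : ∑ i, (g (π i)) ^ 2 = ∑ i, (g i) ^ 2 := Equiv.sum_comp π (fun i => (g i) ^ 2)
  have h3 : ∑ i, (g i) ^ 2 = ∑ i, hH.eigenvalues i := by
    apply Finset.sum_congr rfl
    intro i _
    exact Real.sq_sqrt (Matrix.eigenvalues_self_mul_conjTranspose_nonneg X i)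
  -- trace of spectral decomposition
  set W : Matrix (Fin n) (Fin n) ℝ := (hH.eigenvectorUnitary : Matrix (Fin n) (Fin n) ℝ) with hW
  have hWo : W * Wᵀ = 1 := by
    have h2 : W * star W = 1 := Matrix.mem_unitaryGroup_iff.mp hH.eigenvectorUnitary.2
    simpa [Matrix.star_eq_conjTranspose] using h2
  have hspec : X * Xᴴ = W * Matrix.diagonal hH.eigenvalues * Wᵀ := by
    have := hH.spectral_theorem
    simp [Matrix.star_eq_conjTranspose, Function.comp] at this; exact this
  have h4 : Matrix.trace (X * Xᴴ) = ∑ i, hH.eigenvalues i := by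
    conv_lhs => rw [hspec]
    rw [Matrix.trace_mul_cycle, mul_eq_one_comm.mp hWo,
      Matrix.one_mul, Matrix.trace_diagonal]
  rw [h1, h2, h3, ← h4, norm_toEuc_sq_eq_trace, ct_eq]

lemma diagRect_mul_transpose {n t : ℕ} (hnt : n ≤ t) (x : Fin n → ℝ) :
    diagRect (t := t) x * (diagRect (t := t) x)ᵀ = Matrix.diagonal (fun i => x i ^ 2) := by
  ext i j
  simp only [Matrix.mul_apply, Matrix.transpose_apply, diagRect, Matrix.diagonal_apply]
  by_cases hij : i = j
  · subst hij
    simp only [if_pos rfl]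
    have key : ∀ k : Fin t,
        ((if (k : ℕ) = (i : ℕ) then x i else 0) * (if (k : ℕ) = (i : ℕ) then x i else 0))
          = if k = Fin.castLE hnt i then x i ^ 2 else 0 := by
      intro k
      by_cases h : (k : ℕ) = (i : ℕ)
      · have : k = Fin.castLE hnt i := Fin.ext h
        simp [h, this, sq]
      · have : ¬(k = Fin.castLE hnt i) := fun hh => h (by rw [hh]; rfl)
        simp [h, this]
    rw [Finset.sum_congr rfl (fun k _ => key k)]
    simp
  · simp only [if_neg hij]
    apply Finset.sum_eq_zero
    intro k _
    by_cases h1 : (k : ℕ) = (i : ℕ)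
    · have h2 : ¬((k : ℕ) = (j : ℕ)) := fun h2 => hij (Fin.ext (h1.symm.trans h2))
      rw [if_neg h2, mul_zero]
    · rw [if_neg h1, zero_mul]

lemma singvals_conj {n t : ℕ} (hnt : n ≤ t) (U : Matrix (Fin n) (Fin n) ℝ)
    (V : Matrix (Fin t) (Fin t) ℝ) (hU : U * Uᵀ = 1) (hV : V * Vᵀ = 1)
    (x : Fin n → ℝ) (hx : Antitone x) (hx0 : ∀ i, 0 ≤ x i) :
    (singvals (U * diagRect (t := t) x * Vᵀ)).ofLp = x := by
  set M := U * diagRect (t := t) x * Vᵀ with hM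
  have hMMt : M * Mᴴ = U * Matrix.diagonal (fun i => x i ^ 2) * Uᵀ := by
    rw [ct_eq, hM, Matrix.transpose_mul, Matrix.transpose_mul, Matrix.transpose_transpose,
      Matrix.mul_assoc (U * diagRect (t := t) x) Vᵀ (V * ((diagRect (t := t) x)ᵀ * Uᵀ)),
      ← Matrix.mul_assoc Vᵀ V ((diagRect (t := t) x)ᵀ * Uᵀ), mul_eq_one_comm.mp hV, Matrix.one_mul,
      ← Matrix.mul_assoc (U * diagRect (t := t) x) (diagRect (t := t) x)ᵀ Uᵀ,
      Matrix.mul_assoc U (diagRect (t := t) x) (diagRect (t := t) x)ᵀ, diagRect_mul_transpose hnt]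
  have hmult := eig_multiset (Matrix.isHermitian_mul_conjTranspose_self M) U
    (fun i => x i ^ 2) hU hMMt
  have hms : Multiset.map (singvals M) Finset.univ.val = Multiset.map x Finset.univ.val := by
    rw [singvals_multiset]
    have h1 : Multiset.map (fun j => Real.sqrt
        ((Matrix.isHermitian_mul_conjTranspose_self M).eigenvalues j)) Finset.univ.val
        = Multiset.map Real.sqrt (Multiset.map
            (Matrix.isHermitian_mul_conjTranspose_self M).eigenvalues Finset.univ.val) := by
      rw [Multiset.map_map]; rfl
    rw [h1, hmult, Multiset.map_map]
    apply Multiset.map_congr rfl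
    intro i _
    simp only [Function.comp_apply]
    rw [Real.sqrt_sq (hx0 i)]
  exact antitone_unique (singvals_antitone M) hx hms

lemma sub_stoch {n : ℕ} (a b : ℕ → ℝ) (D : ℕ → ℕ → ℝ)
    (ha : Antitone a) (hb : Antitone b) (ha0 : ∀ i, 0 ≤ a i) (hb0 : ∀ i, 0 ≤ b i)
    (han : a n = 0) (hbn : b n = 0)
    (hD0 : ∀ i j, 0 ≤ D i j)
    (hrow : ∀ i, ∑ j ∈ Finset.range n, D i j ≤ 1)
    (hcol : ∀ j, ∑ i ∈ Finset.range n, D i j ≤ 1) :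
    ∑ i ∈ Finset.range n, ∑ j ∈ Finset.range n, a i * b j * D i j
      ≤ ∑ i ∈ Finset.range n, a i * b i := by
  set α : ℕ → ℝ := fun k => a k - a (k + 1) with hα
  set β : ℕ → ℝ := fun k => b k - b (k + 1) with hβ
  have hα0 : ∀ k, 0 ≤ α k := fun k => sub_nonneg.mpr (ha (Nat.le_succ k))
  have hβ0 : ∀ k, 0 ≤ β k := fun k => sub_nonneg.mpr (hb (Nat.le_succ k))
  have tele : ∀ (f : ℕ → ℝ), f n = 0 → ∀ i, i < n → f i = ∑ k ∈ Ico i n, (f k - f (k + 1)) := by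
    intro f hfn i hi
    rw [Finset.sum_Ico_eq_sub _ hi.le, Finset.sum_range_sub' f, Finset.sum_range_sub' f, hfn]
    ring
  -- expand a i * b j into double sums
  have expand : ∀ i j, i < n → j < n → ∀ c : ℝ,
      a i * b j * c = ∑ p ∈ (Ico i n) ×ˢ (Ico j n), α p.1 * β p.2 * c := by
    intro i j hi hj c
    rw [tele a han i hi, tele b hbn j hj, Finset.sum_product]
    rw [Finset.sum_mul_sum, Finset.sum_mul]
    apply Finset.sum_congr rfl
    intro k _
    rw [Finset.sum_mul]
  -- LHS as sum over pairs
  have lhs_eq : ∑ i ∈ Finset.range n, ∑ j ∈ Finset.range n, a i * b j * D i j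
      = ∑ q ∈ (Finset.range n) ×ˢ (Finset.range n), α q.1 * β q.2 *
          (∑ p ∈ (Finset.range (q.1+1)) ×ˢ (Finset.range (q.2+1)), D p.1 p.2) := by
    rw [← Finset.sum_product']
    have h1 : ∀ p : ℕ × ℕ, p ∈ (Finset.range n) ×ˢ (Finset.range n) →
        a p.1 * b p.2 * D p.1 p.2
          = ∑ q ∈ (Ico p.1 n) ×ˢ (Ico p.2 n), α q.1 * β q.2 * D p.1 p.2 := by
      intro p hp
      rw [Finset.mem_product, Finset.mem_range, Finset.mem_range] at hp
      exact expand p.1 p.2 hp.1 hp.2 _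
    rw [Finset.sum_congr rfl h1]
    rw [Finset.sum_comm' (s := (Finset.range n) ×ˢ (Finset.range n))
      (t := fun p => (Ico p.1 n) ×ˢ (Ico p.2 n))
      (t' := (Finset.range n) ×ˢ (Finset.range n))
      (s' := fun q => (Finset.range (q.1+1)) ×ˢ (Finset.range (q.2+1)))
      (h := by
        intro x y
        simp only [Finset.mem_product, Finset.mem_range, Finset.mem_Ico]
        omega)]
    apply Finset.sum_congr rfl
    intro q _
    rw [Finset.mul_sum]
  have rhs_eq : ∑ i ∈ Finset.range n, a i * b i
      = ∑ q ∈ (Finset.range n) ×ˢ (Finset.range n), α q.1 * β q.2 *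
          ((min q.1 q.2 : ℕ) + 1 : ℝ) := by
    have h1 : ∀ i ∈ Finset.range n, a i * b i
        = ∑ q ∈ (Ico i n) ×ˢ (Ico i n), α q.1 * β q.2 * 1 := by
      intro i hi
      rw [Finset.mem_range] at hi
      have := expand i i hi hi 1
      rwa [mul_one] at this
    rw [Finset.sum_congr rfl h1]
    rw [Finset.sum_comm' (s := Finset.range n)
      (t := fun i => (Ico i n) ×ˢ (Ico i n))
      (t' := (Finset.range n) ×ˢ (Finset.range n))
      (s' := fun q => Finset.range (min q.1 q.2 + 1))
      (h := by
        intro x y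
        simp only [Finset.mem_product, Finset.mem_range, Finset.mem_Ico]
        omega)]
    apply Finset.sum_congr rfl
    intro q _
    rw [Finset.sum_const, Finset.card_range, nsmul_eq_mul, mul_one, mul_comm]
    push_cast
    ring
  rw [lhs_eq, rhs_eq]
  apply Finset.sum_le_sum
  intro q hq
  rw [Finset.mem_product, Finset.mem_range, Finset.mem_range] at hq
  have hT : ∑ p ∈ (Finset.range (q.1+1)) ×ˢ (Finset.range (q.2+1)), D p.1 p.2
      ≤ ((min q.1 q.2 : ℕ) + 1 : ℝ) := by
    rcases le_total q.1 q.2 with h | h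
    · have : ∑ p ∈ (Finset.range (q.1+1)) ×ˢ (Finset.range (q.2+1)), D p.1 p.2
          = ∑ i ∈ Finset.range (q.1+1), ∑ j ∈ Finset.range (q.2+1), D i j := by
        rw [Finset.sum_product]
      rw [this, min_eq_left h]
      have step : ∀ i ∈ Finset.range (q.1+1), ∑ j ∈ Finset.range (q.2+1), D i j ≤ 1 := by
        intro i _
        calc ∑ j ∈ Finset.range (q.2+1), D i j ≤ ∑ j ∈ Finset.range n, D i j :=
              Finset.sum_le_sum_of_subset_of_nonneg
                (Finset.range_subset_range.mpr hq.2) (fun j _ _ => hD0 i j)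
          _ ≤ 1 := hrow i
      calc ∑ i ∈ Finset.range (q.1+1), ∑ j ∈ Finset.range (q.2+1), D i j
          ≤ ∑ i ∈ Finset.range (q.1+1), 1 := Finset.sum_le_sum step
        _ = ((q.1 : ℝ) + 1) := by simp
        _ = ((q.1 : ℕ) + 1 : ℝ) := by push_cast; ring
    · have : ∑ p ∈ (Finset.range (q.1+1)) ×ˢ (Finset.range (q.2+1)), D p.1 p.2
          = ∑ j ∈ Finset.range (q.2+1), ∑ i ∈ Finset.range (q.1+1), D i j := by
        rw [Finset.sum_product, Finset.sum_comm]
      rw [this, min_eq_right h]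
      have step : ∀ j ∈ Finset.range (q.2+1), ∑ i ∈ Finset.range (q.1+1), D i j ≤ 1 := by
        intro j _
        calc ∑ i ∈ Finset.range (q.1+1), D i j ≤ ∑ i ∈ Finset.range n, D i j :=
              Finset.sum_le_sum_of_subset_of_nonneg
                (Finset.range_subset_range.mpr hq.1) (fun i _ _ => hD0 i j)
          _ ≤ 1 := hcol j
      calc ∑ j ∈ Finset.range (q.2+1), ∑ i ∈ Finset.range (q.1+1), D i j
          ≤ ∑ j ∈ Finset.range (q.2+1), 1 := Finset.sum_le_sum step
        _ = ((q.2 : ℝ) + 1) := by simp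
        _ = ((q.2 : ℕ) + 1 : ℝ) := by push_cast; ring
  exact mul_le_mul_of_nonneg_left hT (mul_nonneg (hα0 q.1) (hβ0 q.2))

lemma svd_exists {n t : ℕ} (hnt : n ≤ t) (Y : Matrix (Fin n) (Fin t) ℝ) :
    ∃ (U : Matrix (Fin n) (Fin n) ℝ) (V : Matrix (Fin t) (Fin t) ℝ),
      U * Uᵀ = 1 ∧ V * Vᵀ = 1 ∧ Y = U * diagRect (t := t) (singvals Y) * Vᵀ := by
  classical
  set hH := Matrix.isHermitian_mul_conjTranspose_self Y with hhH
  set g : Fin n → ℝ := fun j => Real.sqrt (hH.eigenvalues j) with hg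
  set π := Tuple.sort (fun j => -g j) with hπ
  have hσ : ∀ i, singvals Y i = g (π i) := fun i => rfl
  have hlam : ∀ i, hH.eigenvalues (π i) = (singvals Y i) ^ 2 := by
    intro i
    rw [hσ i, hg]
    exact (Real.sq_sqrt (Matrix.eigenvalues_self_mul_conjTranspose_nonneg Y (π i))).symm
  set B := hH.eigenvectorBasis with hB
  set B' := B.reindex π.symm with hB'
  have hB'app : ∀ i, B' i = B (π i) := fun i => by
    rw [hB', OrthonormalBasis.reindex_apply, Equiv.symm_symm]
  set U : Matrix (Fin n) (Fin n) ℝ :=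
    (EuclideanSpace.basisFun (Fin n) ℝ).toBasis.toMatrix B'.toBasis with hUdef
  have hUmem : U ∈ Matrix.unitaryGroup (Fin n) ℝ :=
    (EuclideanSpace.basisFun (Fin n) ℝ).toMatrix_orthonormalBasis_mem_unitary B'
  have hUapp : ∀ l i, U l i = B (π i) l := by
    intro l i
    have : U l i = B' i l := rfl
    rw [this, hB'app]
  have hU : U * Uᵀ = 1 := by
    have h2 : U * star U = 1 := Matrix.mem_unitaryGroup_iff.mp hUmem
    simpa [Matrix.star_eq_conjTranspose] using h2
  -- the vectors w i = Yᵀ *ᵥ (column i of U)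
  set w : Fin n → (Fin t → ℝ) := fun i => Yᵀ *ᵥ ⇑(B (π i)) with hw
  have hdot : ∀ u v : Fin n → ℝ, (Yᵀ *ᵥ u) ⬝ᵥ (Yᵀ *ᵥ v) = u ⬝ᵥ ((Y * Yᵀ) *ᵥ v) := by
    intro u v
    have h1 : Yᵀ *ᵥ u ⬝ᵥ (Yᵀ *ᵥ v) = ((u ᵥ* Y) ᵥ* Yᵀ) ⬝ᵥ v := by
      rw [Matrix.mulVec_transpose, dotProduct_mulVec]
    have h2 : u ⬝ᵥ ((Y * Yᵀ) *ᵥ v) = (u ᵥ* (Y * Yᵀ)) ⬝ᵥ v := dotProduct_mulVec u (Y*Yᵀ) v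
    rw [h1, h2, Matrix.vecMul_vecMul]
  have hinner_dot : ∀ x y : EuclideanSpace ℝ (Fin n), (inner ℝ x y : ℝ) = (⇑x) ⬝ᵥ (⇑y) := by
    intro x y
    simp [PiLp.inner_apply, dotProduct, mul_comm]
  have hBdot : ∀ a b : Fin n, (⇑(B a)) ⬝ᵥ (⇑(B b)) = if a = b then 1 else 0 := by
    intro a b
    rw [← hinner_dot]
    exact orthonormal_iff_ite.mp B.orthonormal a b
  have hww : ∀ i j, w i ⬝ᵥ w j = (singvals Y j) ^ 2 * (if i = j then 1 else 0) := by
    intro i j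
    rw [hw]
    show (Yᵀ *ᵥ ⇑(B (π i))) ⬝ᵥ (Yᵀ *ᵥ ⇑(B (π j))) = _
    rw [hdot]
    have heq : (Y * Yᵀ) *ᵥ ⇑(B (π j)) = hH.eigenvalues (π j) • ⇑(B (π j)) := by
      rw [← ct_eq Y]
      exact hH.mulVec_eigenvectorBasis (π j)
    rw [heq, dotProduct_smul, hlam j, smul_eq_mul, hBdot,
      if_congr (Equiv.apply_eq_iff_eq π) rfl rfl]
  have hwzero : ∀ i, singvals Y i = 0 → w i = 0 := by
    intro i h0
    have h1 : w i ⬝ᵥ w i = 0 := by rw [hww i i, h0]; simp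
    funext k
    have h2 : ∑ k', (w i k') * (w i k') = 0 := h1
    have h3 : ∀ k' ∈ Finset.univ, 0 ≤ w i k' * w i k' := fun k' _ => mul_self_nonneg _
    have := (Finset.sum_eq_zero_iff_of_nonneg h3).mp h2 k (Finset.mem_univ k)
    exact mul_self_eq_zero.mp this
  -- the orthonormal family v
  set v : Fin n → EuclideanSpace ℝ (Fin t) := fun i => (singvals Y i)⁻¹ • (WithLp.toLp 2 (w i) : EuclideanSpace ℝ (Fin t)) with hv
  set s : Set (Fin t) := {k | ∃ h : (k : ℕ) < n, singvals Y ⟨(k : ℕ), h⟩ ≠ 0} with hs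
  set vt : Fin t → EuclideanSpace ℝ (Fin t) := fun k =>
    if h : (k : ℕ) < n then v ⟨(k : ℕ), h⟩ else 0 with hvt
  have hinner_dot' : ∀ x y : EuclideanSpace ℝ (Fin t), (inner ℝ x y : ℝ) = (⇑x) ⬝ᵥ (⇑y) := by
    intro x y
    simp [PiLp.inner_apply, dotProduct, mul_comm]
  have hvv : ∀ i j : Fin n, singvals Y i ≠ 0 → singvals Y j ≠ 0 →
      (inner ℝ (v i) (v j) : ℝ) = if i = j then 1 else 0 := by
    intro i j hi hj
    rw [hv, hinner_dot']
    show ((singvals Y i)⁻¹ • w i) ⬝ᵥ ((singvals Y j)⁻¹ • w j) = _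
    rw [smul_dotProduct, dotProduct_smul, hww i j, smul_eq_mul, smul_eq_mul]
    by_cases hij : i = j
    · subst hij
      simp only [if_pos rfl, mul_one]
      field_simp
    · simp [hij]
  have horth : Orthonormal ℝ (s.restrict vt) := by
    rw [orthonormal_iff_ite]
    rintro ⟨k, hk⟩ ⟨k', hk'⟩
    obtain ⟨hkn, hkσ⟩ := hk
    obtain ⟨hkn', hkσ'⟩ := hk'
    have e1 : vt k = v ⟨(k : ℕ), hkn⟩ := by rw [hvt]; simp only [dif_pos hkn]
    have e2 : vt k' = v ⟨(k' : ℕ), hkn'⟩ := by rw [hvt]; simp only [dif_pos hkn']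
    show (inner ℝ (vt k) (vt k') : ℝ) = _
    rw [e1, e2, hvv _ _ hkσ hkσ']
    congr 1
    simp only [eq_iff_iff]
    constructor
    · intro h
      have hval := congrArg (Fin.val (n := n)) h
      exact Subtype.ext (Fin.ext hval)
    · intro h
      have hval : ((k : Fin t) : ℕ) = ((k' : Fin t) : ℕ) :=
        congrArg (fun z : s => ((z : Fin t) : ℕ)) h
      exact Fin.ext hval
  obtain ⟨b, hb⟩ := horth.exists_orthonormalBasis_extension_of_card_eq
    (by simp [finrank_euclideanSpace])
  set V : Matrix (Fin t) (Fin t) ℝ :=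
    (EuclideanSpace.basisFun (Fin t) ℝ).toBasis.toMatrix b.toBasis with hVdef
  have hVmem : V ∈ Matrix.unitaryGroup (Fin t) ℝ :=
    (EuclideanSpace.basisFun (Fin t) ℝ).toMatrix_orthonormalBasis_mem_unitary b
  have hVapp : ∀ j k, V j k = b k j := fun j k => rfl
  have hV : V * Vᵀ = 1 := by
    have h2 : V * star V = 1 := Matrix.mem_unitaryGroup_iff.mp hVmem
    simpa [Matrix.star_eq_conjTranspose] using h2
  refine ⟨U, V, hU, hV, ?_⟩
  have key : Uᵀ * Y = diagRect (t := t) (singvals Y) * Vᵀ := by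
    ext i k
    have lhs_eq : (Uᵀ * Y) i k = w i k := by
      rw [Matrix.mul_apply]
      rw [hw]
      show ∑ l, Uᵀ i l * Y l k = (Yᵀ *ᵥ ⇑(B (π i))) k
      rw [Matrix.mulVec]
      show _ = (fun l => Yᵀ k l) ⬝ᵥ ⇑(B (π i))
      rw [dotProduct]
      apply Finset.sum_congr rfl
      intro l _
      rw [Matrix.transpose_apply, Matrix.transpose_apply, hUapp, mul_comm]
    have rhs_eq : (diagRect (t := t) (singvals Y) * Vᵀ : Matrix (Fin n) (Fin t) ℝ) i k
        = singvals Y i * b (Fin.castLE hnt i) k := by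
      rw [Matrix.mul_apply]
      have key2 : ∀ m : Fin t,
          diagRect (t := t) (singvals Y) i m * Vᵀ m k
            = if m = Fin.castLE hnt i then singvals Y i * b m k else 0 := by
        intro m
        simp only [diagRect, Matrix.transpose_apply]
        by_cases h : (m : ℕ) = (i : ℕ)
        · have : m = Fin.castLE hnt i := Fin.ext h
          rw [if_pos h, if_pos this, hVapp]
        · have : ¬(m = Fin.castLE hnt i) := fun hh => h (by rw [hh]; rfl)
          rw [if_neg h, if_neg this, zero_mul]
      rw [Finset.sum_congr rfl (fun m _ => key2 m), Finset.sum_ite_eq' Finset.univ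
        (Fin.castLE hnt i) (fun m => singvals Y i * b m k)]
      simp
    rw [lhs_eq, rhs_eq]
    by_cases h0 : singvals Y i = 0
    · rw [h0, zero_mul, hwzero i h0]
      rfl
    · have hmem : (Fin.castLE hnt i) ∈ s := by
        rw [hs]
        refine ⟨i.isLt, ?_⟩
        convert h0 using 2
        rfl
      rw [hb _ hmem]
      simp only [hvt]
      have hlt : ((Fin.castLE hnt i : Fin t) : ℕ) < n := i.isLt
      rw [dif_pos hlt]
      have : (⟨((Fin.castLE hnt i : Fin t) : ℕ), hlt⟩ : Fin n) = i := Fin.ext rfl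
      rw [this, hv]
      show w i k = singvals Y i * (((singvals Y i)⁻¹ • (WithLp.toLp 2 (w i) : EuclideanSpace ℝ (Fin t))) k)
      show w i k = singvals Y i * ((singvals Y i)⁻¹ * w i k)
      field_simp
  calc Y = (U * Uᵀ) * Y := by rw [hU, Matrix.one_mul]
    _ = U * (Uᵀ * Y) := by rw [Matrix.mul_assoc]
    _ = U * (diagRect (t := t) (singvals Y) * Vᵀ) := by rw [key]
    _ = U * diagRect (t := t) (singvals Y) * Vᵀ := by rw [Matrix.mul_assoc]

lemma sub_stoch_fin {n : ℕ} (a b : Fin n → ℝ) (D : Fin n → Fin n → ℝ)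
    (ha : Antitone a) (hb : Antitone b) (ha0 : ∀ i, 0 ≤ a i) (hb0 : ∀ i, 0 ≤ b i)
    (hD0 : ∀ i j, 0 ≤ D i j) (hrow : ∀ i, ∑ j, D i j ≤ 1) (hcol : ∀ j, ∑ i, D i j ≤ 1) :
    ∑ i, ∑ j, a i * b j * D i j ≤ ∑ i, a i * b i := by
  classical
  set a' : ℕ → ℝ := fun m => if h : m < n then a ⟨m, h⟩ else 0 with ha'
  set b' : ℕ → ℝ := fun m => if h : m < n then b ⟨m, h⟩ else 0 with hb'
  set D' : ℕ → ℕ → ℝ := fun p q =>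
    if hp : p < n then (if hq : q < n then D ⟨p, hp⟩ ⟨q, hq⟩ else 0) else 0 with hD'
  have ext_antitone : ∀ (f : Fin n → ℝ), Antitone f → (∀ i, 0 ≤ f i) →
      Antitone (fun m => if h : m < n then f ⟨m, h⟩ else 0) := by
    intro f hf hf0 p q hpq
    by_cases hq : q < n
    · have hp : p < n := lt_of_le_of_lt hpq hq
      simp only [dif_pos hp, dif_pos hq]
      exact hf hpq
    · simp only [dif_neg hq]
      by_cases hp : p < n
      · simp only [dif_pos hp]; exact hf0 _
      · simp only [dif_neg hp]; exact le_refl 0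
  have ha'anti : Antitone a' := ext_antitone a ha ha0
  have hb'anti : Antitone b' := ext_antitone b hb hb0
  have hD'0 : ∀ p q, 0 ≤ D' p q := by
    intro p q
    by_cases hp : p < n
    · by_cases hq : q < n
      · simp only [hD', dif_pos hp, dif_pos hq]; exact hD0 _ _
      · simp only [hD', dif_pos hp, dif_neg hq]; exact le_refl 0
    · simp only [hD', dif_neg hp]; exact le_refl 0
  have conv1 : ∀ (f : ℕ → ℝ), ∑ m ∈ Finset.range n, f m = ∑ i : Fin n, f (i : ℕ) :=
    fun f => (Fin.sum_univ_eq_sum_range f n).symm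
  have hrow' : ∀ p, ∑ q ∈ Finset.range n, D' p q ≤ 1 := by
    intro p
    rw [conv1]
    by_cases hp : p < n
    · have : ∀ i : Fin n, D' p (i : ℕ) = D ⟨p, hp⟩ i := by
        intro i; simp only [hD', dif_pos hp, dif_pos i.isLt, Fin.eta]
      rw [Finset.sum_congr rfl (fun i _ => this i)]
      exact hrow _
    · have : ∀ i : Fin n, D' p (i : ℕ) = 0 := by
        intro i; simp only [hD', dif_neg hp]
      rw [Finset.sum_congr rfl (fun i _ => this i)]
      simp
  have hcol' : ∀ q, ∑ p ∈ Finset.range n, D' p q ≤ 1 := by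
    intro q
    rw [conv1]
    by_cases hq : q < n
    · have : ∀ i : Fin n, D' (i : ℕ) q = D i ⟨q, hq⟩ := by
        intro i; simp only [hD', dif_pos i.isLt, dif_pos hq, Fin.eta]
      rw [Finset.sum_congr rfl (fun i _ => this i)]
      exact hcol _
    · have : ∀ i : Fin n, D' (i : ℕ) q = 0 := by
        intro i; simp only [hD', dif_pos i.isLt, dif_neg hq]
      rw [Finset.sum_congr rfl (fun i _ => this i)]
      simp
  have ha'n : a' n = 0 := by simp [ha']
  have hb'n : b' n = 0 := by simp [hb']
  have ha'0 : ∀ m, 0 ≤ a' m := by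
    intro m; by_cases h : m < n
    · simp only [ha', dif_pos h]; exact ha0 _
    · simp only [ha', dif_neg h]; exact le_refl 0
  have hb'0 : ∀ m, 0 ≤ b' m := by
    intro m; by_cases h : m < n
    · simp only [hb', dif_pos h]; exact hb0 _
    · simp only [hb', dif_neg h]; exact le_refl 0
  have main := sub_stoch a' b' D' ha'anti hb'anti ha'0 hb'0 ha'n hb'n hD'0 hrow' hcol'
  have lhs_conv : ∑ p ∈ Finset.range n, ∑ q ∈ Finset.range n, a' p * b' q * D' p q
      = ∑ i, ∑ j, a i * b j * D i j := by
    rw [conv1]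
    apply Finset.sum_congr rfl
    intro i _
    rw [conv1]
    apply Finset.sum_congr rfl
    intro j _
    simp only [ha', hb', hD', dif_pos i.isLt, dif_pos j.isLt, Fin.eta]
  have rhs_conv : ∑ p ∈ Finset.range n, a' p * b' p = ∑ i, a i * b i := by
    rw [conv1]
    apply Finset.sum_congr rfl
    intro i _
    simp only [ha', hb', dif_pos i.isLt, Fin.eta]
  rw [← lhs_conv, ← rhs_conv]
  exact main

lemma diagRect_mul_left {n t t' : ℕ} (hnt : n ≤ t) (x : Fin n → ℝ)
    (N : Matrix (Fin t) (Fin t') ℝ) (i : Fin n) (j : Fin t') :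
    (diagRect (t := t) x * N : Matrix (Fin n) (Fin t') ℝ) i j = x i * N (Fin.castLE hnt i) j := by
  rw [Matrix.mul_apply]
  have key : ∀ m : Fin t, diagRect (t := t) x i m * N m j
      = if m = Fin.castLE hnt i then x i * N m j else 0 := by
    intro m
    simp only [diagRect]
    by_cases h : (m : ℕ) = (i : ℕ)
    · rw [if_pos h, if_pos (Fin.ext h)]
    · rw [if_neg h, if_neg (fun hh => h (by rw [hh]; rfl)), zero_mul]
  rw [Finset.sum_congr rfl (fun m _ => key m),
    Finset.sum_ite_eq' Finset.univ (Fin.castLE hnt i) (fun m => x i * N m j)]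
  simp

lemma mul_diagRect_transpose {n t t' : ℕ} (hnt : n ≤ t) (x : Fin n → ℝ)
    (N : Matrix (Fin t') (Fin t) ℝ) (c : Fin t') (j : Fin n) :
    (N * (diagRect (t := t) x)ᵀ : Matrix (Fin t') (Fin n) ℝ) c j = x j * N c (Fin.castLE hnt j) := by
  rw [Matrix.mul_apply]
  have key : ∀ m : Fin t, N c m * (diagRect (t := t) x)ᵀ m j
      = if m = Fin.castLE hnt j then x j * N c m else 0 := by
    intro m
    simp only [diagRect, Matrix.transpose_apply]
    by_cases h : (m : ℕ) = (j : ℕ)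
    · rw [if_pos h, if_pos (Fin.ext h), mul_comm]
    · rw [if_neg h, if_neg (fun hh => h (by rw [hh]; rfl)), mul_zero]
  rw [Finset.sum_congr rfl (fun m _ => key m),
    Finset.sum_ite_eq' Finset.univ (Fin.castLE hnt j) (fun m => x j * N c m)]
  simp

lemma vonNeumann {n t : ℕ} (hnt : n ≤ t) (Y X : Matrix (Fin n) (Fin t) ℝ) :
    Matrix.trace (Y * Xᵀ) ≤ ∑ i, singvals Y i * singvals X i := by
  obtain ⟨U₁, V₁, hU₁, hV₁, hY⟩ := svd_exists hnt Y
  obtain ⟨U₂, V₂, hU₂, hV₂, hX⟩ := svd_exists hnt X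
  set σY := singvals Y
  set σX := singvals X
  set D1 : Matrix (Fin n) (Fin t) ℝ := diagRect (t := t) σY with hD1
  set D2 : Matrix (Fin n) (Fin t) ℝ := diagRect (t := t) σX with hD2
  set Z : Matrix (Fin t) (Fin t) ℝ := V₁ᵀ * V₂ with hZ
  set W : Matrix (Fin n) (Fin n) ℝ := U₂ᵀ * U₁ with hW
  have hZZ : Z * Zᵀ = 1 := by
    rw [hZ, Matrix.transpose_mul, Matrix.transpose_transpose,
      Matrix.mul_assoc, ← Matrix.mul_assoc V₂ V₂ᵀ V₁, hV₂, Matrix.one_mul,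
      mul_eq_one_comm.mp hV₁]
  have hZZ' : Zᵀ * Z = 1 := mul_eq_one_comm.mp hZZ
  have hWW : W * Wᵀ = 1 := by
    rw [hW, Matrix.transpose_mul, Matrix.transpose_transpose,
      Matrix.mul_assoc, ← Matrix.mul_assoc U₁ U₁ᵀ U₂, hU₁, Matrix.one_mul,
      mul_eq_one_comm.mp hU₂]
  have hWW' : Wᵀ * W = 1 := mul_eq_one_comm.mp hWW
  have htr : Matrix.trace (Y * Xᵀ)
      = ∑ i, ∑ j, σY i * σX j * (Z (Fin.castLE hnt i) (Fin.castLE hnt j) * W j i) := by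
    have hXT : Xᵀ = V₂ * (D2)ᵀ * U₂ᵀ := by
      rw [hX, Matrix.transpose_mul, Matrix.transpose_mul, Matrix.transpose_transpose,
        Matrix.mul_assoc]
    have step1 : Y * Xᵀ = U₁ * (D1 * Z * (D2)ᵀ * U₂ᵀ) := by
      rw [hY, hXT]
      simp only [Matrix.mul_assoc, hZ]
    rw [step1, Matrix.trace_mul_comm]
    have step2 : D1 * Z * (D2)ᵀ * U₂ᵀ * U₁
        = D1 * Z * (D2)ᵀ * W := by
      rw [hW, Matrix.mul_assoc]
    rw [step2]
    rw [Matrix.trace]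
    have entry : ∀ i : Fin n, (D1 * Z * (D2)ᵀ * W) i i
        = ∑ j, σY i * σX j * (Z (Fin.castLE hnt i) (Fin.castLE hnt j) * W j i) := by
      intro i
      rw [Matrix.mul_apply]
      apply Finset.sum_congr rfl
      intro j _
      rw [mul_diagRect_transpose hnt σX (D1 * Z) i j,
        diagRect_mul_left hnt σY Z i (Fin.castLE hnt j)]
      ring
    simp only [Matrix.diag_apply]
    exact Finset.sum_congr rfl (fun i _ => entry i)
  rw [htr]
  set D : Fin n → Fin n → ℝ := fun i j =>
    ((Z (Fin.castLE hnt i) (Fin.castLE hnt j)) ^ 2 + (W j i) ^ 2) / 2 with hD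
  have hbound : ∀ i j, σY i * σX j * (Z (Fin.castLE hnt i) (Fin.castLE hnt j) * W j i)
      ≤ σY i * σX j * D i j := by
    intro i j
    apply mul_le_mul_of_nonneg_left _ (mul_nonneg (singvals_nonneg Y i) (singvals_nonneg X j))
    have := sq_nonneg (Z (Fin.castLE hnt i) (Fin.castLE hnt j) - W j i)
    simp only [hD]
    nlinarith
  have hD0 : ∀ i j, 0 ≤ D i j := by
    intro i j; simp only [hD]; positivity
  have hsub : ∀ (c : Fin t), ∑ j : Fin n, (Z c (Fin.castLE hnt j)) ^ 2 ≤ 1 := by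
    intro c
    have h1 : ∑ j : Fin n, (Z c (Fin.castLE hnt j)) ^ 2
        = ∑ b ∈ Finset.univ.image (Fin.castLE hnt), (Z c b) ^ 2 := by
      rw [Finset.sum_image (fun x _ y _ h => Fin.castLE_injective hnt h)]
    have h2 : ∑ b ∈ Finset.univ.image (Fin.castLE hnt), (Z c b) ^ 2
        ≤ ∑ b : Fin t, (Z c b) ^ 2 :=
      Finset.sum_le_sum_of_subset_of_nonneg (Finset.subset_univ _)
        (fun b _ _ => sq_nonneg _)
    have h3 : ∑ b : Fin t, (Z c b) ^ 2 = (Z * Zᵀ) c c := by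
      rw [Matrix.mul_apply]
      apply Finset.sum_congr rfl
      intro b _
      rw [Matrix.transpose_apply, sq]
    have h4 : (Z * Zᵀ) c c = 1 := by rw [hZZ]; simp
    rw [h1]
    calc _ ≤ ∑ b : Fin t, (Z c b) ^ 2 := h2
      _ = 1 := by rw [h3, h4]
  have hsub' : ∀ (c : Fin t), ∑ j : Fin n, (Z (Fin.castLE hnt j) c) ^ 2 ≤ 1 := by
    intro c
    have h1 : ∑ j : Fin n, (Z (Fin.castLE hnt j) c) ^ 2
        = ∑ b ∈ Finset.univ.image (Fin.castLE hnt), (Z b c) ^ 2 := by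
      rw [Finset.sum_image (fun x _ y _ h => Fin.castLE_injective hnt h)]
    have h2 : ∑ b ∈ Finset.univ.image (Fin.castLE hnt), (Z b c) ^ 2
        ≤ ∑ b : Fin t, (Z b c) ^ 2 :=
      Finset.sum_le_sum_of_subset_of_nonneg (Finset.subset_univ _)
        (fun b _ _ => sq_nonneg _)
    have h3 : ∑ b : Fin t, (Z b c) ^ 2 = (Zᵀ * Z) c c := by
      rw [Matrix.mul_apply]
      apply Finset.sum_congr rfl
      intro b _
      rw [Matrix.transpose_apply, sq]
    have h4 : (Zᵀ * Z) c c = 1 := by rw [hZZ']; simp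
    rw [h1]
    calc _ ≤ ∑ b : Fin t, (Z b c) ^ 2 := h2
      _ = 1 := by rw [h3, h4]
  have hWrow : ∀ i : Fin n, ∑ j : Fin n, (W j i) ^ 2 = 1 := by
    intro i
    have h3 : ∑ j : Fin n, (W j i) ^ 2 = (Wᵀ * W) i i := by
      rw [Matrix.mul_apply]
      apply Finset.sum_congr rfl
      intro j _
      rw [Matrix.transpose_apply, sq]
    rw [h3, hWW']
    simp
  have hWcol : ∀ j : Fin n, ∑ i : Fin n, (W j i) ^ 2 = 1 := by
    intro j
    have h3 : ∑ i : Fin n, (W j i) ^ 2 = (W * Wᵀ) j j := by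
      rw [Matrix.mul_apply]
      apply Finset.sum_congr rfl
      intro i _
      rw [Matrix.transpose_apply, sq]
    rw [h3, hWW]
    simp
  have hrow : ∀ i, ∑ j, D i j ≤ 1 := by
    intro i
    simp only [hD]
    rw [← Finset.sum_div, Finset.sum_add_distrib]
    have := hsub (Fin.castLE hnt i)
    have := hWrow i
    linarith
  have hcol : ∀ j, ∑ i, D i j ≤ 1 := by
    intro j
    simp only [hD]
    rw [← Finset.sum_div, Finset.sum_add_distrib]
    have := hsub' (Fin.castLE hnt j)
    have := hWcol j
    linarith
  calc ∑ i, ∑ j, σY i * σX j * (Z (Fin.castLE hnt i) (Fin.castLE hnt j) * W j i)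
      ≤ ∑ i, ∑ j, σY i * σX j * D i j := by
        apply Finset.sum_le_sum
        intro i _
        exact Finset.sum_le_sum (fun j _ => hbound i j)
    _ ≤ ∑ i, σY i * σX i := sub_stoch_fin σY σX D (singvals_antitone Y) (singvals_antitone X)
        (singvals_nonneg Y) (singvals_nonneg X) hD0 hrow hcol

lemma norm_euc_sq {n : ℕ} (x : EuclideanSpace ℝ (Fin n)) : ‖x‖ ^ 2 = ∑ i, x i ^ 2 := by
  rw [EuclideanSpace.norm_eq, Real.sq_sqrt (by positivity)]
  exact Finset.sum_congr rfl (fun i _ => by rw [Real.norm_eq_abs, sq_abs])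

lemma norm_euc_sub_sq {n : ℕ} (x y : EuclideanSpace ℝ (Fin n)) :
    ‖x - y‖ ^ 2 = ∑ i, x i ^ 2 + ∑ i, y i ^ 2 - 2 * ∑ i, x i * y i := by
  rw [norm_euc_sq]
  have h1 : ∀ i, (x - y) i ^ 2 = x i ^ 2 + y i ^ 2 - 2 * (x i * y i) := by
    intro i
    have : (x - y) i = x i - y i := rfl
    rw [this]; ring
  rw [Finset.sum_congr rfl (fun i _ => h1 i), Finset.sum_sub_distrib,
    Finset.sum_add_distrib, ← Finset.mul_sum]

lemma mirsky {n t : ℕ} (hnt : n ≤ t) (Y X : Matrix (Fin n) (Fin t) ℝ) :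
    dist (singvals Y) (singvals X) ≤ dist (toEuc Y) (toEuc X) := by
  rw [dist_eq_norm, dist_eq_norm, toEuc_sub]
  have hexp : Matrix.trace ((Y - X) * (Y - X)ᵀ)
      = Matrix.trace (Y * Yᵀ) + Matrix.trace (X * Xᵀ) - 2 * Matrix.trace (Y * Xᵀ) := by
    rw [Matrix.transpose_sub, Matrix.sub_mul, Matrix.mul_sub, Matrix.mul_sub,
      Matrix.trace_sub, Matrix.trace_sub, Matrix.trace_sub]
    have hswap : Matrix.trace (X * Yᵀ) = Matrix.trace (Y * Xᵀ) := by
      rw [← Matrix.trace_transpose (X * Yᵀ), Matrix.transpose_mul, Matrix.transpose_transpose,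
        Matrix.trace_mul_comm]
    rw [hswap]; ring
  have key : ‖toEuc (Y - X)‖ ^ 2
      = ∑ i, singvals Y i ^ 2 + ∑ i, singvals X i ^ 2 - 2 * Matrix.trace (Y * Xᵀ) := by
    rw [norm_toEuc_sq_eq_trace, hexp, ← norm_toEuc_sq_eq_trace, ← norm_toEuc_sq_eq_trace,
      sum_singvals_sq, sum_singvals_sq]
  have keyσ : ‖singvals Y - singvals X‖ ^ 2
      = ∑ i, singvals Y i ^ 2 + ∑ i, singvals X i ^ 2 - 2 * ∑ i, singvals Y i * singvals X i :=
    norm_euc_sub_sq _ _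
  have hvn := vonNeumann hnt Y X
  have hsq : ‖singvals Y - singvals X‖ ^ 2 ≤ ‖toEuc (Y - X)‖ ^ 2 := by
    rw [key, keyσ]; linarith
  nlinarith [norm_nonneg (singvals Y - singvals X), norm_nonneg (toEuc (Y - X))]

lemma diagRect_sub {n t : ℕ} (x y : Fin n → ℝ) :
    diagRect (t := t) x - diagRect (t := t) y = diagRect (t := t) (fun i => x i - y i) := by
  ext i j
  simp only [Matrix.sub_apply, diagRect]
  by_cases h : (j : ℕ) = (i : ℕ) <;> simp [h]

lemma norm_toEuc_diagRect {n t : ℕ} (hnt : n ≤ t) (z : Fin n → ℝ) :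
    ‖toEuc (diagRect (t := t) z : Matrix (Fin n) (Fin t) ℝ)‖ ^ 2 = ∑ i, z i ^ 2 := by
  rw [norm_toEuc_sq]
  apply Finset.sum_congr rfl
  intro i _
  have key : ∀ j : Fin t, (diagRect (t := t) z : Matrix (Fin n) (Fin t) ℝ) i j ^ 2
      = if j = Fin.castLE hnt i then z i ^ 2 else 0 := by
    intro j
    simp only [diagRect]
    by_cases h : (j : ℕ) = (i : ℕ)
    · rw [if_pos h, if_pos (Fin.ext h)]
    · rw [if_neg h, if_neg (fun hh => h (by rw [hh]; rfl))]
      simp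
  rw [Finset.sum_congr rfl (fun j _ => key j),
    Finset.sum_ite_eq' Finset.univ (Fin.castLE hnt i) (fun _ => z i ^ 2)]
  simp

lemma approx {n t : ℕ} (hnt : n ≤ t) (S : Set (EuclideanSpace ℝ (Fin n))) (hS : AbsSymm S)
    (Y : Matrix (Fin n) (Fin t) ℝ) (x : EuclideanSpace ℝ (Fin n)) (hx : x ∈ S) :
    ∃ X : Matrix (Fin n) (Fin t) ℝ, singvals X ∈ S ∧
      dist (toEuc Y) (toEuc X) ≤ dist (singvals Y) x := by
  classical
  set τ := Tuple.sort (fun j => -|x j|) with hτ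
  set xh : EuclideanSpace ℝ (Fin n) := WithLp.toLp 2 (fun i => |x (τ i)|) with hxh
  have hxh_anti : Antitone xh := by
    intro i j hij
    have := Tuple.monotone_sort (fun j : Fin n => -|x j|) hij
    simp only [Function.comp_apply] at this
    have h2 : -|x (τ i)| ≤ -|x (τ j)| := this
    simp only [hxh]
    linarith
  have hxh0 : ∀ i, 0 ≤ xh i := fun i => abs_nonneg _
  have hxhS : xh ∈ S := by
    set ε : Fin n → ℝ := fun i => if x (τ i) < 0 then -1 else 1 with hε
    have hsign : IsSignFn ε := by
      intro i
      by_cases h : x (τ i) < 0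
      · right; simp [hε, h]
      · left; simp [hε, h]
    have hmem := (hS τ ε hsign x).mp hx
    have heq : (WithLp.toLp 2 (fun i => ε i * x (τ i)) : EuclideanSpace ℝ (Fin n)) = xh := by
      ext i
      simp only [hε, hxh]
      by_cases h : x (τ i) < 0
      · rw [if_pos h, abs_of_neg h]; ring
      · rw [if_neg h, abs_of_nonneg (not_lt.mp h), one_mul]
    rwa [heq] at hmem
  obtain ⟨U, V, hU, hV, hY⟩ := svd_exists hnt Y
  refine ⟨U * diagRect (t := t) xh * Vᵀ, ?_, ?_⟩
  · rw [WithLp.ofLp_injective 2 (singvals_conj hnt U V hU hV xh hxh_anti hxh0)]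
    exact hxhS
  · rw [dist_eq_norm, dist_eq_norm, toEuc_sub]
    have hdiff : Y - U * diagRect (t := t) xh * Vᵀ
        = U * diagRect (t := t) (fun i => singvals Y i - xh i) * Vᵀ := by
      conv_lhs => rw [hY]
      rw [← diagRect_sub, Matrix.mul_sub, Matrix.sub_mul]
    rw [hdiff, frob_orth_inv U V hU hV]
    -- now compare ‖diagRect (t := t) (σY - xh)‖ with ‖σY - x‖
    have hL : ‖toEuc (diagRect (t := t) (fun i => singvals Y i - xh i) : Matrix (Fin n) (Fin t) ℝ)‖ ^ 2
        = ∑ i, singvals Y i ^ 2 + ∑ i, xh i ^ 2 - 2 * ∑ i, singvals Y i * xh i := by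
      rw [norm_toEuc_diagRect hnt]
      have h1 : ∀ i : Fin n, (singvals Y i - xh i) ^ 2
          = singvals Y i ^ 2 + xh i ^ 2 - 2 * (singvals Y i * xh i) := fun i => by ring
      rw [Finset.sum_congr rfl (fun i _ => h1 i), Finset.sum_sub_distrib,
        Finset.sum_add_distrib, ← Finset.mul_sum]
    have hR : ‖singvals Y - x‖ ^ 2
        = ∑ i, singvals Y i ^ 2 + ∑ i, x i ^ 2 - 2 * ∑ i, singvals Y i * x i :=
      norm_euc_sub_sq _ _
    have hxx : ∑ i, xh i ^ 2 = ∑ i, x i ^ 2 := by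
      have h1 : ∀ i : Fin n, xh i ^ 2 = (fun i => x i ^ 2) (τ i) := by
        intro i; simp only [hxh]; rw [sq_abs]
      rw [Finset.sum_congr rfl (fun i _ => h1 i)]
      exact Equiv.sum_comp τ (fun i => x i ^ 2)
    have hdotle : ∑ i, singvals Y i * x i ≤ ∑ i, singvals Y i * xh i := by
      have step1 : ∑ i, singvals Y i * x i ≤ ∑ i, singvals Y i * |x i| := by
        apply Finset.sum_le_sum
        intro i _
        exact mul_le_mul_of_nonneg_left (le_abs_self _) (singvals_nonneg Y i)
      have step2 : ∑ i, singvals Y i * |x i| = ∑ i, singvals Y i * xh (τ.symm i) := by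
        apply Finset.sum_congr rfl
        intro i _
        congr 1
        simp only [hxh]
        rw [Equiv.apply_symm_apply]
      have step3 : ∑ i, singvals Y i * xh (τ.symm i) ≤ ∑ i, singvals Y i * xh i := by
        set P : Fin n → Fin n → ℝ := fun i j => if j = τ.symm i then 1 else 0 with hP
        have hPsum : ∑ i, ∑ j, singvals Y i * xh j * P i j
            = ∑ i, singvals Y i * xh (τ.symm i) := by
          apply Finset.sum_congr rfl
          intro i _
          have h1 : ∀ j, singvals Y i * xh j * P i j
              = if j = τ.symm i then singvals Y i * xh j else 0 := by
            intro j
            simp only [hP]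
            by_cases h : j = τ.symm i <;> simp [h]
          rw [Finset.sum_congr rfl (fun j _ => h1 j),
            Finset.sum_ite_eq' Finset.univ (τ.symm i) (fun j => singvals Y i * xh j)]
          simp
        rw [← hPsum]
        apply sub_stoch_fin (singvals Y) xh P (singvals_antitone Y) hxh_anti
          (singvals_nonneg Y) hxh0
        · intro i j
          simp only [hP]
          by_cases h : j = τ.symm i <;> simp [h]
        · intro i
          simp only [hP]
          rw [Finset.sum_ite_eq' Finset.univ (τ.symm i) (fun _ => (1:ℝ))]
          simp
        · intro j
          simp only [hP]
          have hcond : ∀ i : Fin n, (j = τ.symm i) = (i = τ j) := by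
            intro i
            rw [eq_iff_iff]
            constructor
            · intro h; rw [h, Equiv.apply_symm_apply]
            · intro h; rw [h, Equiv.symm_apply_apply]
          have h1 : ∀ i : Fin n, (if j = τ.symm i then (1:ℝ) else 0)
              = if i = τ j then 1 else 0 := fun i => if_congr (iff_of_eq (hcond i)) rfl rfl
          rw [Finset.sum_congr rfl (fun i _ => h1 i)]
          rw [Finset.sum_ite_eq' Finset.univ (τ j) (fun _ => (1:ℝ))]
          simp
      calc ∑ i, singvals Y i * x i ≤ ∑ i, singvals Y i * |x i| := step1
        _ = ∑ i, singvals Y i * xh (τ.symm i) := step2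
        _ ≤ ∑ i, singvals Y i * xh i := step3
    have hsq : ‖toEuc (diagRect (t := t) (fun i => singvals Y i - xh i) : Matrix (Fin n) (Fin t) ℝ)‖ ^ 2
        ≤ ‖singvals Y - x‖ ^ 2 := by
      rw [hL, hR, hxx]; linarith
    nlinarith [norm_nonneg (toEuc (diagRect (t := t) (fun i => singvals Y i - xh i)
      : Matrix (Fin n) (Fin t) ℝ)), norm_nonneg (singvals Y - x)]


end AuxLemmas

/-- transfer of distance: for absolutely symmetric `S`, the Frobenius
distance of `Y` to `σ⁻¹(S)` equals the Euclidean distance of `σ(Y)` to `S`. -/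


theorem dist_transfer {n t : ℕ} (hnt : n ≤ t)
    (S : Set (EuclideanSpace ℝ (Fin n))) (hS : AbsSymm S)
    (Y : Matrix (Fin n) (Fin t) ℝ) :
    Metric.infDist (toEuc Y) (toEuc '' {X : Matrix (Fin n) (Fin t) ℝ | singvals X ∈ S})
      = Metric.infDist (singvals Y) S := by
  rcases S.eq_empty_or_nonempty with hSe | hSne
  · have hM : {X : Matrix (Fin n) (Fin t) ℝ | singvals X ∈ S} = ∅ := by
      ext X; simp [hSe]
    rw [hM, hSe, Set.image_empty, Metric.infDist_empty, Metric.infDist_empty]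
  · obtain ⟨x₀, hx₀⟩ := hSne
    obtain ⟨X₀, hX₀S, _⟩ := approx hnt S hS Y x₀ hx₀
    have hMne : (toEuc '' {X : Matrix (Fin n) (Fin t) ℝ | singvals X ∈ S}).Nonempty :=
      ⟨toEuc X₀, X₀, hX₀S, rfl⟩
    apply le_antisymm
    · rw [Metric.infDist_eq_iInf (s := S)]
      have : Nonempty S := ⟨⟨x₀, hx₀⟩⟩
      apply le_ciInf
      rintro ⟨x, hx⟩
      obtain ⟨X, hXS, hd⟩ := approx hnt S hS Y x hx
      calc Metric.infDist (toEuc Y) (toEuc '' {X : Matrix (Fin n) (Fin t) ℝ | singvals X ∈ S})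
          ≤ dist (toEuc Y) (toEuc X) := Metric.infDist_le_dist_of_mem ⟨X, hXS, rfl⟩
        _ ≤ dist (singvals Y) x := hd
    · conv_rhs => rw [Metric.infDist_eq_iInf]
      have : Nonempty (toEuc '' {X : Matrix (Fin n) (Fin t) ℝ | singvals X ∈ S}) :=
        hMne.to_subtype
      apply le_ciInf
      rintro ⟨z, hz⟩
      obtain ⟨X, hXS, rfl⟩ := hz
      calc Metric.infDist (singvals Y) S ≤ dist (singvals Y) (singvals X) :=
            Metric.infDist_le_dist_of_mem hXS
        _ ≤ dist (toEuc Y) (toEuc X) := mirsky hnt Y X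
end
end
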